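/- arXiv:1005.2427 — 7 statements merged into one kernel-verified Lean document; each statement's English description precedes it below -/
import Mathlib

section
/- Every vector ψ ∈ (ℂ^d)^{⊗N} admits a matrix product representation: there exist bond dimensions D_0 = D_N = 1 and D_i ≤ d^{min(i, N−i)} for 1 ≤ i ≤ N−1, and complex D_{i−1} × D_i matrices A_i^{[M]} (M ∈ {0,…,d−1}, i ∈ {1,…,N}), such that for every multi-index (M_1,…,M_N) the coefficient of ψ on the product basis state |M_1,…,M_N⟩ equals the scalar A_1^{[M_1]} A_2^{[M_2]} ⋯ A_N^{[M_N]}. In particular every state on N sites is a matrix product state of bond dimension at most d^{⌈N/2⌉}. -/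
open Matrix

/-!
STATEMENT 2: Every vector of `(ℂ^d)^{⊗N}` admits an (open boundary) matrix product
representation with bond dimensions `D 0 = D N = 1` and `D i ≤ d ^ min i (N - i)`.
-/

/-- The matrix product `A_1^{[M_1]} A_2^{[M_2]} ⋯ A_N^{[M_N]}` of site-dependent
Kraus operators with bond dimensions `D 0, D 1, …, D N`. -/
noncomputable def mpsProd {d : ℕ} {D : ℕ → ℕ}
    (A : (i : ℕ) → Fin d → Matrix (Fin (D i)) (Fin (D (i + 1))) ℂ) :
    (N : ℕ) → (Fin N → Fin d) → Matrix (Fin (D 0)) (Fin (D N)) ℂ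
  | 0 => fun _ => 1
  | (N + 1) => fun M => mpsProd A N (fun i => M i.castSucc) * A N (M (Fin.last N))

namespace MPSAux

variable {d : ℕ}

def dec (hd : 1 ≤ d) (k : ℕ) (p : Fin (d ^ k)) (j : ℕ) : Fin d :=
  if h : j < k then finFunctionFinEquiv.symm p ⟨j, h⟩ else ⟨0, hd⟩

def enc (k : ℕ) (f : ℕ → Fin d) : Fin (d ^ k) :=
  finFunctionFinEquiv (fun j : Fin k => f j)

lemma dec_enc (hd : 1 ≤ d) {k j : ℕ} (f : ℕ → Fin d) (h : j < k) :
    dec hd k (enc k f) j = f j := by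
  simp [dec, enc, h]

lemma dec_of_le (hd : 1 ≤ d) {k j : ℕ} (p : Fin (d ^ k)) (h : k ≤ j) :
    dec hd k p j = ⟨0, hd⟩ := by
  simp [dec, Nat.not_lt.mpr h]

lemma dec_inj (hd : 1 ≤ d) {k : ℕ} {p p' : Fin (d ^ k)}
    (h : ∀ j < k, dec hd k p j = dec hd k p' j) : p = p' := by
  have : finFunctionFinEquiv.symm p = finFunctionFinEquiv.symm p' := by
    funext j
    have := h j j.isLt
    simpa [dec, j.isLt] using this
  exact finFunctionFinEquiv.symm.injective this

lemma cond_iff (hd : 1 ≤ d) {k : ℕ} (f : ℕ → Fin d) (p : Fin (d ^ k)) :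
    (∀ j < k, dec hd k p j = f j) ↔ p = enc k f := by
  constructor
  · intro h
    exact dec_inj hd fun j hj => (h j hj).trans (dec_enc hd f hj).symm
  · rintro rfl j hj
    exact dec_enc hd f hj

lemma cond_iff' (hd : 1 ≤ d) {k m : ℕ} (h : k = m) (f : ℕ → Fin d) (p : Fin (d ^ k)) :
    (∀ j < m, dec hd k p j = f j) ↔ p = enc k f := by
  subst h; exact cond_iff hd f p

lemma sum_collapse₁ {n : ℕ} (p0 : Fin n) (g : Fin n → ℂ) (cond : Fin n → Prop)
    [∀ p, Decidable (cond p)] (h : ∀ p, cond p ↔ p = p0) :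
    (∑ p : Fin n, (if cond p then (1 : ℂ) else 0) * g p) = g p0 := by
  simp only [h, ite_mul, one_mul, zero_mul]
  simp

lemma sum_collapse₂ {n : ℕ} (p0 : Fin n) (g : Fin n → ℂ) (cond : Fin n → Prop)
    [∀ p, Decidable (cond p)] (h : ∀ p, cond p ↔ p = p0) :
    (∑ p : Fin n, g p * (if cond p then (1 : ℂ) else 0)) = g p0 := by
  simp only [h, mul_ite, mul_one, mul_zero]
  simp

end MPSAux

namespace MPSAux

variable {d : ℕ}

/-- The explicit MPS tensors: the left half copies/records the physical indices,
the middle site (site `(N+1)/2 - 1`) contains the coefficients of `ψ`, and the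
right half checks the guessed future indices. -/
noncomputable def mA (hd : 1 ≤ d) (N : ℕ) (ψ : (Fin N → Fin d) → ℂ) (i : ℕ) (M : Fin d) :
    Matrix (Fin (d ^ min i (N - i))) (Fin (d ^ min (i + 1) (N - (i + 1)))) ℂ :=
  fun p q =>
    if i + 1 < (N + 1) / 2 then
      (if (∀ j < i, dec hd _ q j = dec hd _ p j) ∧ dec hd _ q i = M then 1 else 0)
    else if i + 1 = (N + 1) / 2 then
      ψ (fun j : Fin N =>
        if (j : ℕ) < i then dec hd _ p j
        else if (j : ℕ) = i then M
        else dec hd _ q ((j : ℕ) - (i + 1)))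
    else
      (if dec hd _ p 0 = M ∧ (∀ j < N, dec hd _ q j = dec hd _ p (j + 1)) then 1 else 0)

lemma mps_left (hd : 1 ≤ d) {N : ℕ} (ψ : (Fin N → Fin d) → ℂ) :
    ∀ i, i < (N + 1) / 2 → ∀ (f : ℕ → Fin d) (a : Fin (d ^ min 0 (N - 0)))
      (q : Fin (d ^ min i (N - i))),
      mpsProd (mA hd N ψ) i (fun j : Fin i => f j) a q
        = if ∀ j < i, dec hd (min i (N - i)) q j = f j then 1 else 0 := by
  intro i
  induction i with
  | zero =>
      intro _ f a q
      have hmin : min 0 (N - 0) = 0 := by omega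
      haveI : Subsingleton (Fin (d ^ min 0 (N - 0))) := by
        rw [hmin, pow_zero]; infer_instance
      have haq : a = q := Subsingleton.elim a q
      subst haq
      simp [mpsProd, Matrix.one_apply]
  | succ i ih =>
      intro hi f a q
      have hi' : i < (N + 1) / 2 := by omega
      have h1 : min i (N - i) = i := by omega
      have h2 : min (i + 1) (N - (i + 1)) = i + 1 := by omega
      have e : mpsProd (mA hd N ψ) (i + 1) (fun j : Fin (i + 1) => f j) a q
          = ∑ p, mpsProd (mA hd N ψ) i (fun j : Fin i => f j) a p
              * mA hd N ψ i (f i) p q := by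
        rw [show mpsProd (mA hd N ψ) (i + 1) (fun j : Fin (i + 1) => f j)
            = mpsProd (mA hd N ψ) i (fun j : Fin i => f j) * mA hd N ψ i (f i) from rfl,
          Matrix.mul_apply]
      rw [e]
      simp only [ih hi' f a]
      have hreg : (i + 1 < (N + 1) / 2) = True := eq_true hi
      simp only [mA, hreg, if_true]
      rw [sum_collapse₁ (enc (min i (N - i)) f) _ _ (fun p => cond_iff' hd h1 f p)]
      refine if_congr ?_ rfl rfl
      constructor
      · rintro ⟨hfwd, hlast⟩ j hj
        rcases Nat.lt_or_ge j i with hji | hji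
        · exact (hfwd j hji).trans (dec_enc hd f (by omega))
        · have hji' : j = i := by omega
          subst hji'; exact hlast
      · intro h
        exact ⟨fun j hj => (h j (by omega)).trans (dec_enc hd f (by omega)).symm, h i (by omega)⟩

end MPSAux

namespace MPSAux

lemma mps_right (hd : 1 ≤ d) {N : ℕ} (hN : 1 ≤ N) (ψ : (Fin N → Fin d) → ℂ) :
    ∀ i, (N + 1) / 2 ≤ i → i ≤ N → ∀ (f : ℕ → Fin d) (a : Fin (d ^ min 0 (N - 0)))
      (p : Fin (d ^ min i (N - i))),
      mpsProd (mA hd N ψ) i (fun j : Fin i => f j) a p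
        = ψ (fun j : Fin N =>
            if (j : ℕ) < i then f j else dec hd (min i (N - i)) p ((j : ℕ) - i)) := by
  intro i hci
  induction i, hci using Nat.le_induction with
  | base =>
      intro hcN f a
      obtain ⟨i0, hi0⟩ : ∃ i0, (N + 1) / 2 = i0 + 1 := ⟨(N + 1) / 2 - 1, by omega⟩
      rw [hi0]
      intro p
      have h1 : min i0 (N - i0) = i0 := by omega
      have e : mpsProd (mA hd N ψ) (i0 + 1) (fun j : Fin (i0 + 1) => f j) a p
          = ∑ p', mpsProd (mA hd N ψ) i0 (fun j : Fin i0 => f j) a p'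
              * mA hd N ψ i0 (f i0) p' p := by
        rw [show mpsProd (mA hd N ψ) (i0 + 1) (fun j : Fin (i0 + 1) => f j)
            = mpsProd (mA hd N ψ) i0 (fun j : Fin i0 => f j) * mA hd N ψ i0 (f i0) from rfl,
          Matrix.mul_apply]
      rw [e]
      simp only [mps_left hd ψ i0 (by omega) f a]
      have hr1 : (i0 + 1 < (N + 1) / 2) = False := eq_false (by omega)
      have hr2 : (i0 + 1 = (N + 1) / 2) = True := eq_true (by omega)
      simp only [mA, hr1, hr2, if_false, if_true]
      rw [sum_collapse₁ (enc (min i0 (N - i0)) f) _ _ (fun p' => cond_iff' hd h1 f p')]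
      congr 1
      funext j
      rcases Nat.lt_trichotomy (j : ℕ) i0 with hj | hj | hj
      · rw [if_pos hj, if_pos (by omega), dec_enc hd f (by omega)]
      · rw [if_neg (by omega), if_pos hj, if_pos (by omega), hj]
      · rw [if_neg (by omega), if_neg (by omega), if_neg (by omega)]
  | succ i hci ih =>
      intro hiN f a q
      have hiN' : i ≤ N := by omega
      have h1 : min i (N - i) = N - i := by omega
      have h2 : min (i + 1) (N - (i + 1)) = N - (i + 1) := by omega
      have e : mpsProd (mA hd N ψ) (i + 1) (fun j : Fin (i + 1) => f j) a q
          = ∑ p, mpsProd (mA hd N ψ) i (fun j : Fin i => f j) a p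
              * mA hd N ψ i (f i) p q := by
        rw [show mpsProd (mA hd N ψ) (i + 1) (fun j : Fin (i + 1) => f j)
            = mpsProd (mA hd N ψ) i (fun j : Fin i => f j) * mA hd N ψ i (f i) from rfl,
          Matrix.mul_apply]
      rw [e]
      simp only [ih hiN' f a]
      have hr1 : (i + 1 < (N + 1) / 2) = False := eq_false (by omega)
      have hr2 : (i + 1 = (N + 1) / 2) = False := eq_false (by omega)
      simp only [mA, hr1, hr2, if_false]
      -- the "guess" for the incoming bond: head `f i`, tail given by `q`
      set g : ℕ → Fin d := fun j =>
        if j = 0 then f i else dec hd (min (i + 1) (N - (i + 1))) q (j - 1) with hg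
      have hiff : ∀ p : Fin (d ^ min i (N - i)),
          (dec hd (min i (N - i)) p 0 = f i ∧
            ∀ j < N, dec hd (min (i + 1) (N - (i + 1))) q j
              = dec hd (min i (N - i)) p (j + 1))
          ↔ p = enc (min i (N - i)) g := by
        intro p
        constructor
        · rintro ⟨hhead, htail⟩
          refine dec_inj hd fun j hj => ?_
          rcases Nat.eq_zero_or_pos j with rfl | hjpos
          · rw [hhead, dec_enc hd g (by omega)]; simp [hg]
          · obtain ⟨j', rfl⟩ : ∃ j', j = j' + 1 := ⟨j - 1, by omega⟩
            rw [← htail j' (by omega), dec_enc hd g (by omega)]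
            simp [hg]
        · rintro rfl
          constructor
          · rw [dec_enc hd g (by omega)]; simp [hg]
          · intro j hj
            rcases Nat.lt_or_ge (j + 1) (min i (N - i)) with hlt | hge
            · rw [dec_enc hd g hlt]
              simp [hg]
            · rw [dec_of_le hd _ hge, dec_of_le hd _ (by omega)]
      rw [sum_collapse₂ (enc (min i (N - i)) g) _ _ hiff]
      congr 1
      funext j
      rcases Nat.lt_trichotomy (j : ℕ) i with hj | hj | hj
      · rw [if_pos hj, if_pos (by omega)]
      · have h0 : (j : ℕ) - i = 0 := by omega
        rw [if_neg (by omega), if_pos (by omega), h0,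
          dec_enc hd g (show 0 < min i (N - i) by omega)]
        simp [hg, hj]
      · rw [if_neg (by omega), if_neg (by omega)]
        rcases Nat.lt_or_ge ((j : ℕ) - i) (min i (N - i)) with hlt | hge
        · rw [dec_enc hd g hlt]
          have hne : (j : ℕ) - i ≠ 0 := by omega
          have harg : (j : ℕ) - i - 1 = (j : ℕ) - (i + 1) := by omega
          simp only [hg, if_neg hne, harg]
        · rw [dec_of_le hd _ hge, dec_of_le hd _ (by omega)]

end MPSAux


theorem exists_mps_representation (d N : ℕ) (hd : 1 ≤ d) (hN : 1 ≤ N)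
    (ψ : (Fin N → Fin d) → ℂ) :
    ∃ (D : ℕ → ℕ) (A : (i : ℕ) → Fin d → Matrix (Fin (D i)) (Fin (D (i + 1))) ℂ),
      D 0 = 1 ∧ D N = 1 ∧
      (∀ i, 1 ≤ i → i ≤ N - 1 → D i ≤ d ^ min i (N - i)) ∧
      ∀ (M : Fin N → Fin d) (a : Fin (D 0)) (b : Fin (D N)),
        ψ M = mpsProd A N M a b := by
  refine ⟨fun i => d ^ min i (N - i), MPSAux.mA hd N ψ, by simp, by simp,
    fun i _ _ => le_refl _, ?_⟩
  intro M a b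
  set f : ℕ → Fin d := fun j => if h : j < N then M ⟨j, h⟩ else ⟨0, hd⟩ with hf
  have hM : M = fun j : Fin N => f j := by
    funext j
    simp [hf, j.isLt]
  have := MPSAux.mps_right hd hN ψ N (by omega) (le_refl N) f a b
  rw [hM]
  rw [this]
  congr 1
  funext j
  rw [if_pos j.isLt]
end

section
/- Let A^{[M]} (M ∈ {0,…,d−1}) be complex D × D matrices, u a d × d unitary matrix, U a D × D unitary matrix and θ ∈ ℝ, and suppose Σ_{M'} u_{M,M'} A^{[M']} = e^{iθ} U A^{[M]} U† for every M. Then for every N ≥ 1 the periodic-boundary MPS |Ψ_N⟩ defined by the matrices A^{[M]} satisfies u^{⊗N} |Ψ_N⟩ = e^{iθN} |Ψ_N⟩. -/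
open Matrix

/-!
STATEMENT 4: If `Σ_{M'} u_{M,M'} A^{[M']} = e^{iθ} U A^{[M]} U†` with `u, U` unitary,
then the periodic-boundary MPS satisfies `u^{⊗N} |Ψ_N⟩ = e^{iθN} |Ψ_N⟩` for every `N ≥ 1`.
-/

/-- The periodic-boundary translationally invariant MPS on `N` sites, built from
`D × D` Kraus operators `A^{[M]}`. -/
noncomputable def mpsPBC {d D : ℕ} (A : Fin d → Matrix (Fin D) (Fin D) ℂ) (N : ℕ) :
    (Fin N → Fin d) → ℂ :=
  fun M => Matrix.trace ((List.ofFn fun i => A (M i)).prod)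

/-- The `N`-fold Kronecker power `u^{⊗N}`, acting as `u` on each tensor factor of
`(ℂ^d)^{⊗N}`. -/
noncomputable def kronPow {d : ℕ} (u : Matrix (Fin d) (Fin d) ℂ) (N : ℕ) :
    Matrix (Fin N → Fin d) (Fin N → Fin d) ℂ :=
  Matrix.of fun M M' => ∏ i, u (M i) (M' i)


lemma sumprod {d D : ℕ} (u : Matrix (Fin d) (Fin d) ℂ) (A : Fin d → Matrix (Fin D) (Fin D) ℂ) :
    ∀ (N : ℕ) (M : Fin N → Fin d),
      ∑ M' : Fin N → Fin d, (∏ i, u (M i) (M' i)) • (List.ofFn fun i => A (M' i)).prod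
        = (List.ofFn fun i => ∑ m, u (M i) m • A m).prod := by
  intro N
  induction N with
  | zero => intro M; simp
  | succ N ih =>
    intro M
    rw [← Equiv.sum_comp (Fin.consEquiv fun _ => Fin d)
      (fun M' => (∏ i, u (M i) (M' i)) • (List.ofFn fun i => A (M' i)).prod)]
    simp only [Fin.consEquiv_apply]
    rw [Fintype.sum_prod_type]
    have hL : ∀ (m0 : Fin d) (g : Fin N → Fin d),
        (List.ofFn fun i => A ((Fin.cons m0 g : Fin (N+1) → Fin d) i)) = A m0 :: List.ofFn (fun i => A (g i)) := by
      intro m0 g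
      rw [List.ofFn_succ]
      simp
    have hP : ∀ (m0 : Fin d) (g : Fin N → Fin d),
        (∏ i, u (M i) ((Fin.cons m0 g : Fin (N+1) → Fin d) i))
          = u (M 0) m0 * ∏ i : Fin N, u (M i.succ) (g i) := by
      intro m0 g
      rw [Fin.prod_univ_succ]
      simp
    calc ∑ m0 : Fin d, ∑ g : Fin N → Fin d,
          (∏ i, u (M i) ((Fin.cons m0 g : Fin (N+1) → Fin d) i)) • (List.ofFn fun i => A ((Fin.cons m0 g : Fin (N+1) → Fin d) i)).prod
        = ∑ m0 : Fin d, ∑ g : Fin N → Fin d,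
            (u (M 0) m0 • A m0) *
              ((∏ i : Fin N, u (M i.succ) (g i)) • (List.ofFn fun i => A (g i)).prod) := by
          refine Finset.sum_congr rfl fun m0 _ => Finset.sum_congr rfl fun g _ => ?_
          rw [hL, hP, List.prod_cons, mul_smul, smul_mul_assoc, mul_smul_comm]
      _ = (∑ m0, u (M 0) m0 • A m0) *
            ∑ g : Fin N → Fin d,
              (∏ i : Fin N, u (M (Fin.succ i)) (g i)) • (List.ofFn fun i => A (g i)).prod := by
          rw [Finset.sum_mul_sum]
      _ = _ := by
          rw [ih (fun i => M i.succ), List.ofFn_succ]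
          rfl

lemma smulpow {D : ℕ} (c : ℂ) :
    ∀ (N : ℕ) (B : Fin N → Matrix (Fin D) (Fin D) ℂ),
      (List.ofFn fun i => c • B i).prod = c ^ N • (List.ofFn B).prod := by
  intro N
  induction N with
  | zero => intro B; simp
  | succ N ih =>
    intro B
    rw [List.ofFn_succ, List.ofFn_succ, List.prod_cons, List.prod_cons,
      ih (fun i => B i.succ), smul_mul_assoc, mul_smul_comm, smul_smul, pow_succ, mul_comm]

lemma conjprod {D : ℕ} (U : Matrix (Fin D) (Fin D) ℂ) (hU : Uᴴ * U = 1) :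
    ∀ (N : ℕ), 1 ≤ N → ∀ (C : Fin N → Matrix (Fin D) (Fin D) ℂ),
      (List.ofFn fun i => U * C i * Uᴴ).prod = U * (List.ofFn C).prod * Uᴴ := by
  intro N
  induction N with
  | zero => omega
  | succ N ih =>
    intro _ C
    rcases Nat.eq_zero_or_pos N with h | h
    · subst h; simp
    · rw [List.ofFn_succ, List.ofFn_succ, List.prod_cons, List.prod_cons,
        ih h (fun i => C i.succ)]
      have : U * C 0 * Uᴴ * (U * (List.ofFn fun i => C i.succ).prod * Uᴴ)
          = U * C 0 * (Uᴴ * U) * (List.ofFn fun i => C i.succ).prod * Uᴴ := by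
        noncomm_ring
      rw [this, hU]
      noncomm_ring


theorem mps_symmetry_sufficiency (d D : ℕ) (hd : 1 ≤ d) (hD : 1 ≤ D)
    (A : Fin d → Matrix (Fin D) (Fin D) ℂ)
    (u : Matrix (Fin d) (Fin d) ℂ) (U : Matrix (Fin D) (Fin D) ℂ) (θ : ℝ)
    (hu : uᴴ * u = 1) (hU : Uᴴ * U = 1)
    (hA : ∀ M, ∑ M', u M M' • A M' = Complex.exp (θ * Complex.I) • (U * A M * Uᴴ)) :
    ∀ N, 1 ≤ N →
      (kronPow u N).mulVec (mpsPBC A N) =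
        Complex.exp (θ * N * Complex.I) • mpsPBC A N := by
  intro N hN
  set c : ℂ := Complex.exp (θ * Complex.I) with hc
  funext M
  have step1 : (kronPow u N).mulVec (mpsPBC A N) M
      = Matrix.trace (∑ M' : Fin N → Fin d,
          (∏ i, u (M i) (M' i)) • (List.ofFn fun i => A (M' i)).prod) := by
    rw [Matrix.mulVec, dotProduct, Matrix.trace_sum]
    refine Finset.sum_congr rfl fun M' _ => ?_
    rw [Matrix.trace_smul]
    rfl
  rw [step1, sumprod]
  have step2 : (List.ofFn fun i => ∑ m, u (M i) m • A m)
      = List.ofFn fun i => c • (U * A (M i) * Uᴴ) := by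
    congr 1; funext i; rw [hA]
  rw [step2, smulpow c N (fun i => U * A (M i) * Uᴴ),
    conjprod U hU N hN (fun i => A (M i)), Matrix.trace_smul,
    Matrix.trace_mul_cycle, hU, Matrix.one_mul]
  have hcN : c ^ N = Complex.exp (θ * N * Complex.I) := by
    rw [hc, ← Complex.exp_nat_mul]
    ring_nf
  rw [hcN]
  simp [mpsPBC]
end

section
/- Let A^{[M]} (M ∈ {0,…,d−1}) be complex D × D matrices defining an injective MPS, i.e. there exists L_0 such that the matrices A^{[M_1]} ⋯ A^{[M_{L_0}]}, over all multi-indices (M_1,…,M_{L_0}), span the full matrix algebra of D × D complex matrices. Let u be a d × d unitary and θ ∈ ℝ, and suppose that for every N ≥ L_0 the periodic-boundary MPS |Ψ_N⟩ defined by the A^{[M]} satisfies u^{⊗N} |Ψ_N⟩ = e^{iθN} |Ψ_N⟩. Then there exists an invertible D × D matrix U such that Σ_{M'} u_{M,M'} A^{[M']} = e^{iθ} U A^{[M]} U^{−1} for every M. -/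
open Matrix

lemma mps_expandFn {d D : ℕ} : ∀ (N : ℕ) (C : Fin N → Fin d → Matrix (Fin D) (Fin D) ℂ),
    (List.ofFn fun i => ∑ m, C i m).prod
      = ∑ M : Fin N → Fin d, (List.ofFn fun i => C i (M i)).prod := by
  intro N
  induction N with
  | zero => intro C; simp
  | succ n ih =>
    intro C
    have hs : (∑ M : Fin (n+1) → Fin d, (List.ofFn fun i => C i (M i)).prod)
        = ∑ p : Fin d × (Fin n → Fin d),
            (List.ofFn fun i => C i (Fin.cons (α := fun _ => Fin d) p.1 p.2 i)).prod :=
      (Fintype.sum_equiv (Fin.consEquiv fun _ : Fin (n+1) => Fin d)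
        (fun p => (List.ofFn fun i => C i (Fin.cons (α := fun _ => Fin d) p.1 p.2 i)).prod)
        (fun M => (List.ofFn fun i => C i (M i)).prod) (fun p => rfl)).symm
    rw [hs, Fintype.sum_prod_type]
    simp only [List.ofFn_succ, List.prod_cons, Fin.cons_zero, Fin.cons_succ]
    rw [Finset.sum_mul, ih (fun i => C i.succ)]
    refine Finset.sum_congr rfl fun m _ => ?_
    rw [Finset.mul_sum]

lemma mps_smulProd {D : ℕ} : ∀ (N : ℕ) (c : Fin N → ℂ) (X : Fin N → Matrix (Fin D) (Fin D) ℂ),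
    (List.ofFn fun i => c i • X i).prod = (∏ i, c i) • (List.ofFn fun i => X i).prod := by
  intro N
  induction N with
  | zero => intro c X; simp
  | succ n ih =>
    intro c X
    simp only [List.ofFn_succ, List.prod_cons, ih (fun i => c i.succ) (fun i => X i.succ),
      Fin.prod_univ_succ, smul_mul_assoc, mul_smul_comm, smul_smul, mul_comm]

/-- word product -/
noncomputable def mpsW {d D : ℕ} (A : Fin d → Matrix (Fin D) (Fin D) ℂ)
    (l : List (Fin d)) : Matrix (Fin D) (Fin D) ℂ := (l.map A).prod

lemma mpsW_append {d D : ℕ} (A : Fin d → Matrix (Fin D) (Fin D) ℂ) (l l' : List (Fin d)) :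
    mpsW A (l ++ l') = mpsW A l * mpsW A l' := by
  simp [mpsW]

lemma mpsW_ofFn {d D : ℕ} (A : Fin d → Matrix (Fin D) (Fin D) ℂ) {N : ℕ} (M : Fin N → Fin d) :
    mpsW A (List.ofFn M) = (List.ofFn fun i => A (M i)).prod := by
  rw [mpsW, List.map_ofFn]; rfl

lemma mpsW_get {d D : ℕ} (A : Fin d → Matrix (Fin D) (Fin D) ℂ) (l : List (Fin d)) :
    mpsW A l = (List.ofFn fun i => A (l.get i)).prod := by
  conv_lhs => rw [← List.ofFn_get l]
  exact mpsW_ofFn A l.get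

lemma mpsW_singleton {d D : ℕ} (A : Fin d → Matrix (Fin D) (Fin D) ℂ) (m : Fin d) :
    mpsW A [m] = A m := by simp [mpsW]

/-- nondegeneracy of the trace pairing -/
lemma mps_trace_nondeg {D : ℕ} (X : Matrix (Fin D) (Fin D) ℂ)
    (h : ∀ Y : Matrix (Fin D) (Fin D) ℂ, Matrix.trace (X * Y) = 0) : X = 0 := by
  ext p q
  have := h (Matrix.single q p 1)
  rw [Matrix.trace] at this
  have hdiag : ∀ k, (X * Matrix.single q p (1:ℂ)).diag k
      = if k = p then X k q else 0 := by
    intro k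
    by_cases hpk : p = k <;>
      simp [Matrix.diag, Matrix.mul_apply, Matrix.single, Matrix.of_apply, hpk,
        eq_comm]
  rw [Finset.sum_congr rfl fun k _ => hdiag k, Finset.sum_ite_eq' Finset.univ p
    (fun k => X k q)] at this
  simpa using this

theorem mps_symmetry_necessity (d D : ℕ) (hd : 1 ≤ d) (hD : 1 ≤ D)
    (A : Fin d → Matrix (Fin D) (Fin D) ℂ) (L0 : ℕ)
    (hinj : Submodule.span ℂ
        (Set.range fun M : Fin L0 → Fin d => (List.ofFn fun i => A (M i)).prod) = ⊤)
    (u : Matrix (Fin d) (Fin d) ℂ) (θ : ℝ) (hu : uᴴ * u = 1)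
    (hsymm : ∀ N, L0 ≤ N →
      (kronPow u N).mulVec (mpsPBC A N) =
        Complex.exp (θ * N * Complex.I) • mpsPBC A N) :
    ∃ U : Matrix (Fin D) (Fin D) ℂ, IsUnit U ∧
      ∀ M, ∑ M', u M M' • A M' = Complex.exp (θ * Complex.I) • (U * A M * U⁻¹) := by
  classical
  set z : ℂ := Complex.exp (θ * Complex.I) with hz
  set B : Fin d → Matrix (Fin D) (Fin D) ℂ :=
    fun m => Complex.exp (-(θ * Complex.I)) • ∑ m', u m m' • A m' with hB
  -- trace equality for words given as functions
  have htrFn : ∀ N, L0 ≤ N → ∀ M : Fin N → Fin d,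
      Matrix.trace ((List.ofFn fun i => B (M i)).prod)
        = Matrix.trace ((List.ofFn fun i => A (M i)).prod) := by
    intro N hN M
    have h := congrFun (hsymm N hN) M
    simp only [Matrix.mulVec, dotProduct, kronPow, mpsPBC, Matrix.of_apply,
      Pi.smul_apply, smul_eq_mul] at h
    have hexp := mps_expandFn N (fun i m' => u (M i) m' • A m')
    have hB' : Matrix.trace ((List.ofFn fun i => ∑ m', u (M i) m' • A m').prod)
        = ∑ M' : Fin N → Fin d, (∏ i, u (M i) (M' i)) *
            Matrix.trace ((List.ofFn fun i => A (M' i)).prod) := by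
      rw [hexp, Matrix.trace_sum]
      refine Finset.sum_congr rfl fun M' _ => ?_
      rw [mps_smulProd N (fun i => u (M i) (M' i)) (fun i => A (M' i)), Matrix.trace_smul,
        smul_eq_mul]
    have hconst : (List.ofFn fun i => B (M i)).prod
        = Complex.exp (-(θ * Complex.I)) ^ N •
            (List.ofFn fun i => ∑ m', u (M i) m' • A m').prod := by
      rw [hB]
      rw [mps_smulProd N (fun _ => Complex.exp (-(θ * Complex.I)))
        (fun i => ∑ m', u (M i) m' • A m')]
      simp
    rw [hconst, Matrix.trace_smul, smul_eq_mul, hB', h]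
    rw [← Complex.exp_nat_mul, ← mul_assoc, ← Complex.exp_add]
    rw [show (N : ℂ) * -(θ * Complex.I) + θ * N * Complex.I = 0 by ring, Complex.exp_zero,
      one_mul]
  -- trace equality for words given as lists
  have htr : ∀ l : List (Fin d), L0 ≤ l.length →
      Matrix.trace (mpsW B l) = Matrix.trace (mpsW A l) := by
    intro l hl
    rw [mpsW_get, mpsW_get]
    exact htrFn l.length hl l.get
  -- spanning families
  set vA : (Fin L0 → Fin d) → Matrix (Fin D) (Fin D) ℂ :=
    fun M => mpsW A (List.ofFn M) with hvA
  set vB : (Fin L0 → Fin d) → Matrix (Fin D) (Fin D) ℂ :=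
    fun M => mpsW B (List.ofFn M) with hvB
  have vA_eq : ∀ M : Fin L0 → Fin d, vA M = (List.ofFn fun i => A (M i)).prod :=
    fun M => mpsW_ofFn A M
  have vB_eq : ∀ M : Fin L0 → Fin d, vB M = (List.ofFn fun i => B (M i)).prod :=
    fun M => mpsW_ofFn B M
  have spanA : Submodule.span ℂ (Set.range vA) = ⊤ := by
    rw [show vA = fun M : Fin L0 → Fin d => (List.ofFn fun i => A (M i)).prod from
      funext fun M => mpsW_ofFn A M]
    exact hinj
  -- A m as a combination of the B's
  have hz1 : z * Complex.exp (-(θ * Complex.I)) = 1 := by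
    rw [hz, ← Complex.exp_add, add_neg_cancel, Complex.exp_zero]
  have hAm : ∀ m, A m = ∑ m', (z * (starRingEnd ℂ) (u m' m)) • B m' := by
    intro m
    have step1 : ∑ m', (z * (starRingEnd ℂ) (u m' m)) • B m'
        = ∑ m', ∑ m'', ((starRingEnd ℂ) (u m' m) * u m' m'') • A m'' := by
      refine Finset.sum_congr rfl fun m' _ => ?_
      rw [hB]
      simp only []
      rw [smul_smul, show z * (starRingEnd ℂ) (u m' m) * Complex.exp (-(θ * Complex.I))
          = (starRingEnd ℂ) (u m' m) by rw [mul_comm z, mul_assoc, hz1, mul_one]]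
      rw [Finset.smul_sum]
      exact Finset.sum_congr rfl fun m'' _ => smul_smul _ _ _
    rw [step1, Finset.sum_comm]
    have step2 : ∀ m'' : Fin d, ∑ m', ((starRingEnd ℂ) (u m' m) * u m' m'') • A m''
        = ((uᴴ * u) m m'') • A m'' := by
      intro m''
      have huv : (uᴴ * u) m m'' = ∑ m', (starRingEnd ℂ) (u m' m) * u m' m'' := by
        simp [Matrix.mul_apply, Matrix.conjTranspose_apply]
      rw [huv, Finset.sum_smul]
    rw [Finset.sum_congr rfl fun m'' _ => step2 m'', hu]
    simp [Matrix.one_apply, ite_smul]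
  -- span of the B words
  have spanB : Submodule.span ℂ (Set.range vB) = ⊤ := by
    rw [eq_top_iff, ← spanA, Submodule.span_le]
    rintro _ ⟨M, rfl⟩
    have hexp : vA M = ∑ f : Fin L0 → Fin d,
        (∏ i, (z * (starRingEnd ℂ) (u (f i) (M i)))) • vB f := by
      rw [vA_eq]
      have hl : (List.ofFn fun i => A (M i))
          = List.ofFn fun i => ∑ m', (z * (starRingEnd ℂ) (u m' (M i))) • B m' :=
        congrArg List.ofFn (funext fun i => hAm (M i))
      rw [hl, mps_expandFn L0 (fun i m' => (z * (starRingEnd ℂ) (u m' (M i))) • B m')]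
      refine Finset.sum_congr rfl fun f _ => ?_
      rw [mps_smulProd L0 _ (fun i => B (f i)), vB_eq]
    rw [hexp]
    exact Submodule.sum_mem _ fun f _ =>
      Submodule.smul_mem _ _ (Submodule.subset_span ⟨f, rfl⟩)
  -- trace pairing against B words detects zero
  have nondegB : ∀ X : Matrix (Fin D) (Fin D) ℂ,
      (∀ J : Fin L0 → Fin d, Matrix.trace (X * vB J) = 0) → X = 0 := by
    intro X hX
    refine mps_trace_nondeg X fun Y => ?_
    have hft : ∀ Y ∈ Set.range vB,
        ((Matrix.traceLinearMap (Fin D) ℂ ℂ) ∘ₗ (LinearMap.mulLeft ℂ X)) Y = (0 : Matrix (Fin D) (Fin D) ℂ →ₗ[ℂ] ℂ) Y := by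
      rintro Y ⟨J, rfl⟩
      simpa using hX J
    have := LinearMap.ext_on spanB hft
    exact congrFun (congrArg DFunLike.coe this) Y
  -- linear-combination maps
  set πA : ((Fin L0 → Fin d) →₀ ℂ) →ₗ[ℂ] Matrix (Fin D) (Fin D) ℂ :=
    Finsupp.linearCombination ℂ vA with hπA
  set πB : ((Fin L0 → Fin d) →₀ ℂ) →ₗ[ℂ] Matrix (Fin D) (Fin D) ℂ :=
    Finsupp.linearCombination ℂ vB with hπB
  have htrmul : ∀ (l : List (Fin d)), L0 ≤ l.length → ∀ J : Fin L0 → Fin d,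
      Matrix.trace (mpsW B l * vB J) = Matrix.trace (mpsW A l * vA J) := by
    intro l hl J
    rw [show vB J = mpsW B (List.ofFn J) from rfl, show vA J = mpsW A (List.ofFn J) from rfl,
      ← mpsW_append, ← mpsW_append]
    exact htr (l ++ List.ofFn J) (le_trans hl (by simp))
  have hpair : ∀ (c : (Fin L0 → Fin d) →₀ ℂ) (J : Fin L0 → Fin d),
      Matrix.trace (πB c * vB J) = Matrix.trace (πA c * vA J) := by
    intro c J
    have hA' := Finsupp.apply_linearCombination ℂ
      ((Matrix.traceLinearMap (Fin D) ℂ ℂ) ∘ₗ (LinearMap.mulRight ℂ (vA J))) vA c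
    have hB' := Finsupp.apply_linearCombination ℂ
      ((Matrix.traceLinearMap (Fin D) ℂ ℂ) ∘ₗ (LinearMap.mulRight ℂ (vB J))) vB c
    simp only [LinearMap.coe_comp, Function.comp_apply, LinearMap.mulRight_apply,
      Matrix.traceLinearMap_apply] at hA' hB'
    have hfun : ((⇑(Matrix.traceLinearMap (Fin D) ℂ ℂ) ∘ ⇑(LinearMap.mulRight ℂ (vB J))) ∘ vB)
        = ((⇑(Matrix.traceLinearMap (Fin D) ℂ ℂ) ∘ ⇑(LinearMap.mulRight ℂ (vA J))) ∘ vA) := by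
      funext I
      show Matrix.trace (vB I * vB J) = Matrix.trace (vA I * vA J)
      exact htrmul (List.ofFn I) (by simp) J
    rw [hπA, hπB, hA', hB', hfun]
  have hker : ∀ c, πA c = 0 → πB c = 0 := by
    intro c hc
    refine nondegB _ (fun J => ?_)
    rw [hpair c J, hc, zero_mul, Matrix.trace_zero]
  have hrangeA : LinearMap.range πA = ⊤ := by
    rw [hπA, Finsupp.range_linearCombination, spanA]
  obtain ⟨g, hg⟩ := πA.exists_rightInverse_of_surjective hrangeA
  set φ : Matrix (Fin D) (Fin D) ℂ →ₗ[ℂ] Matrix (Fin D) (Fin D) ℂ := πB ∘ₗ g with hφ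
  have hφA : ∀ c, φ (πA c) = πB c := by
    intro c
    have h1 : πA (g (πA c) - c) = 0 := by
      rw [map_sub, show πA (g (πA c)) = πA c from LinearMap.congr_fun hg (πA c)]
      exact sub_self _
    have h2 := hker _ h1
    rw [map_sub] at h2
    have h3 := sub_eq_zero.mp h2
    simpa [hφ] using h3
  have hπAsurj : Function.Surjective πA := LinearMap.range_eq_top.mp hrangeA
  have hφW : ∀ l : List (Fin d), L0 ≤ l.length → φ (mpsW A l) = mpsW B l := by
    intro l hl
    obtain ⟨c, hc⟩ := hπAsurj (mpsW A l)
    rw [← hc, hφA]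
    have hsub : πB c - mpsW B l = 0 := by
      refine nondegB _ fun J => ?_
      rw [sub_mul, Matrix.trace_sub, hpair c J, hc, htrmul l hl J, sub_self]
    exact sub_eq_zero.mp hsub
  have hφvA : ∀ I : Fin L0 → Fin d, φ (vA I) = vB I :=
    fun I => hφW (List.ofFn I) (by simp)
  have hφsurj : Function.Surjective φ := by
    intro Y
    have hrangeB : LinearMap.range πB = ⊤ := by
      rw [hπB, Finsupp.range_linearCombination, spanB]
    obtain ⟨c, hc⟩ := LinearMap.range_eq_top.mp hrangeB Y
    exact ⟨πA c, by rw [hφA, hc]⟩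
  have hmulJ : ∀ J : Fin L0 → Fin d, ∀ X, φ (X * vA J) = φ X * vB J := by
    intro J
    have hext := LinearMap.ext_on (R := ℂ) spanA
      (f := φ ∘ₗ LinearMap.mulRight ℂ (vA J)) (g := LinearMap.mulRight ℂ (vB J) ∘ₗ φ) ?_
    · intro X
      have := LinearMap.congr_fun hext X
      simpa using this
    · rintro _ ⟨I, rfl⟩
      show φ (vA I * vA J) = φ (vA I) * vB J
      rw [hφvA]
      have h1 : vA I * vA J = mpsW A (List.ofFn I ++ List.ofFn J) := by
        rw [mpsW_append]
      rw [h1, hφW _ (by rw [List.length_append, List.length_ofFn]; exact Nat.le_add_right _ _),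
        mpsW_append]
  have hmul : ∀ X Y, φ (X * Y) = φ X * φ Y := by
    intro X Y
    have hext := LinearMap.ext_on (R := ℂ) spanA
      (f := φ ∘ₗ LinearMap.mulLeft ℂ X) (g := LinearMap.mulLeft ℂ (φ X) ∘ₗ φ) ?_
    · have := LinearMap.congr_fun hext Y
      simpa using this
    · rintro _ ⟨J, rfl⟩
      show φ (X * vA J) = φ X * φ (vA J)
      rw [hmulJ J X, hφvA]
  have hone : φ 1 = 1 := by
    have h1 : ∀ W, W * φ 1 = W := by
      intro W
      obtain ⟨X, hX⟩ := hφsurj W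
      rw [← hX, ← hmul, mul_one]
    have := h1 1
    rwa [one_mul] at this
  have hsingle : ∀ m, φ (A m) = B m := by
    intro m
    have hm : ∀ X, φ (X * A m) = φ X * B m := by
      have hext := LinearMap.ext_on (R := ℂ) spanA
        (f := φ ∘ₗ LinearMap.mulRight ℂ (A m)) (g := LinearMap.mulRight ℂ (B m) ∘ₗ φ) ?_
      · intro X
        have := LinearMap.congr_fun hext X
        simpa using this
      · rintro _ ⟨I, rfl⟩
        show φ (vA I * A m) = φ (vA I) * B m
        rw [hφvA]
        have h1 : vA I * A m = mpsW A (List.ofFn I ++ [m]) := by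
          rw [mpsW_append, mpsW_singleton]
        rw [h1, hφW _ (by rw [List.length_append, List.length_ofFn]; exact Nat.le_add_right _ _),
          mpsW_append, mpsW_singleton]
    have := hm 1
    rwa [one_mul, hone, one_mul] at this
  have hφinj : Function.Injective φ := LinearMap.injective_iff_surjective.mpr hφsurj
  -- matrix units
  set i0 : Fin D := ⟨0, hD⟩ with hi0
  set F : Fin D → Fin D → Matrix (Fin D) (Fin D) ℂ :=
    fun i j => φ (Matrix.single i j 1) with hF
  have hEmul : ∀ i j k l : Fin D, Matrix.single i j (1:ℂ) * Matrix.single k l 1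
      = if j = k then Matrix.single i l 1 else 0 := by
    intro i j k l
    by_cases h : j = k
    · subst h
      rw [if_pos rfl]
      rw [Matrix.single_mul_single_same, one_mul]
    · rw [if_neg h]
      exact Matrix.single_mul_single_of_ne (c := (1:ℂ)) i j k h 1
  have hFmul : ∀ i j k l, F i j * F k l = if j = k then F i l else 0 := by
    intro i j k l
    simp only [hF]
    rw [← hmul, hEmul]
    by_cases h : j = k <;> simp [h]
  have hF00 : F i0 i0 ≠ 0 := by
    intro h
    have h0 : Matrix.single i0 i0 (1:ℂ) = 0 := by
      apply hφinj
      simp only [hF] at h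
      rw [h, map_zero]
    have h1 : Matrix.single i0 i0 (1:ℂ) i0 i0 = 0 := by rw [h0]; rfl
    rw [Matrix.single_apply_same] at h1
    exact one_ne_zero h1
  -- find a vector not killed by F i0 i0
  have hvex : ∃ v : Fin D → ℂ, F i0 i0 *ᵥ v ≠ 0 := by
    by_contra hcon
    push_neg at hcon
    apply hF00
    ext p q
    have hc := congrFun (hcon (Pi.single q 1)) p
    rw [Matrix.mulVec_single] at hc
    simpa using hc
  obtain ⟨v, hv⟩ := hvex
  set w : Fin D → ℂ := F i0 i0 *ᵥ v with hw
  have hwne : w ≠ 0 := hv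
  have hFw : F i0 i0 *ᵥ w = w := by
    rw [hw, Matrix.mulVec_mulVec, hFmul]
    simp
  set U : Matrix (Fin D) (Fin D) ℂ := Matrix.of (fun p q => (F q i0 *ᵥ w) p) with hU
  have hUx : ∀ x : Fin D → ℂ, U *ᵥ x = (∑ q, x q • F q i0) *ᵥ w := by
    intro x
    funext p
    rw [Matrix.mulVec, dotProduct, Matrix.mulVec, dotProduct]
    simp only [hU, Matrix.of_apply, Matrix.mulVec, dotProduct, Finset.sum_apply,
      Matrix.sum_apply, Matrix.smul_apply, Pi.smul_apply, smul_eq_mul, Finset.sum_mul,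
      Finset.mul_sum]
    rw [Finset.sum_comm]
    exact Finset.sum_congr rfl fun r _ => Finset.sum_congr rfl fun q _ => by ring
  have hUker : ∀ x : Fin D → ℂ, U *ᵥ x = 0 → x = 0 := by
    intro x hx
    funext k
    have h3 := congrArg (fun y => F i0 k *ᵥ y) hx
    rw [hUx, Matrix.mulVec_zero, Matrix.mulVec_mulVec] at h3
    have h4 : F i0 k * (∑ q, x q • F q i0) = x k • F i0 i0 := by
      rw [Finset.mul_sum]
      rw [Finset.sum_congr rfl fun q _ => by rw [mul_smul_comm, hFmul]]
      simp
    rw [h4, Matrix.smul_mulVec, hFw] at h3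
    exact (smul_eq_zero.mp h3).resolve_right hwne
  have hUinj : Function.Injective (U.mulVec) := by
    intro x y hxy
    have hsub : U *ᵥ (x - y) = 0 := by
      rw [Matrix.mulVec_sub, hxy, sub_self]
    exact sub_eq_zero.mp (hUker _ hsub)
  have hUunit : IsUnit U := Matrix.mulVec_injective_iff_isUnit.mp hUinj
  have hFU : ∀ i j, F i j * U = U * (Matrix.single i j 1) := by
    intro i j
    ext p q
    have hL : (F i j * U) p q = ((F i j * F q i0) *ᵥ w) p := by
      rw [← Matrix.mulVec_mulVec, Matrix.mul_apply]
      simp only [hU, Matrix.of_apply]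
      rfl
    rw [hL, hFmul]
    by_cases h : j = q
    · subst h
      rw [if_pos rfl, Matrix.mul_single_apply_same, mul_one]
      simp [hU]
    · rw [if_neg h, Matrix.zero_mulVec,
        Matrix.mul_single_apply_of_ne (c := 1) i j p q (fun hh => h hh.symm) U]
      rfl
  have hint : ∀ X : Matrix (Fin D) (Fin D) ℂ, φ X * U = U * X := by
    have hbasis : (LinearMap.mulRight ℂ U ∘ₗ φ) = LinearMap.mulLeft ℂ U := by
      refine Module.Basis.ext (Matrix.stdBasis ℂ (Fin D) (Fin D)) ?_
      rintro ⟨i, j⟩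
      rw [Matrix.stdBasis_eq_single]
      show φ (Matrix.single i j 1) * U = U * Matrix.single i j 1
      exact hFU i j
    intro X
    have := LinearMap.congr_fun hbasis X
    simpa using this
  refine ⟨U, hUunit, fun m => ?_⟩
  have hdet : IsUnit U.det := (Matrix.isUnit_iff_isUnit_det U).mp hUunit
  have h1 : φ (A m) = U * A m * U⁻¹ := by
    calc φ (A m) = φ (A m) * (U * U⁻¹) := by rw [Matrix.mul_nonsing_inv U hdet, mul_one]
    _ = (φ (A m) * U) * U⁻¹ := by rw [mul_assoc]
    _ = U * A m * U⁻¹ := by rw [hint (A m)]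
  have h3 : B m = U * A m * U⁻¹ := by rw [← hsingle m, h1]
  have h4 : (∑ m', u m m' • A m') = z • B m := by
    rw [hB]
    simp only []
    rw [smul_smul, hz1, one_smul]
  rw [h4, h3]
end

section
/- Let A^{[M]} (M ∈ {0,…,d−1}) be complex D × D matrices, B a d × d complex matrix and X a D × D complex matrix, and suppose Σ_{M'} B_{M,M'} A^{[M']} = X A^{[M]} − A^{[M]} X for every M. Then for every N ≥ 1 the periodic-boundary MPS |Ψ_N⟩ defined by the A^{[M]} satisfies (Σ_{i=1}^N B^{(i)}) |Ψ_N⟩ = 0, where B^{(i)} denotes the operator on (ℂ^d)^{⊗N} acting as B on the i-th tensor factor and as the identity on all other factors. -/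
open Matrix

/-- The operator `B^{(i)}` on `(ℂ^d)^{⊗N}`, acting as `B` on the `i`-th tensor factor
and as the identity on every other factor. -/
noncomputable def siteOp {d : ℕ} (B : Matrix (Fin d) (Fin d) ℂ) (N : ℕ) (i : Fin N) :
    Matrix (Fin N → Fin d) (Fin N → Fin d) ℂ :=
  Matrix.of fun M M' =>
    ∏ j, if j = i then B (M j) (M' j) else (if M j = M' j then 1 else 0)

/-- Summing the delta-constrained kernel against `F` picks out updates at site `i`. -/
lemma sum_update_aux {N d : ℕ} (M : Fin N → Fin d) (i : Fin N)
    (B : Matrix (Fin d) (Fin d) ℂ) (F : (Fin N → Fin d) → ℂ) :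
    ∑ M' : Fin N → Fin d,
        (∏ j, if j = i then B (M j) (M' j) else if M j = M' j then 1 else 0) * F M'
      = ∑ m' : Fin d, B (M i) m' * F (Function.update M i m') := by
  rw [← (Equiv.piSplitAt i fun _ => Fin d).symm.sum_comp
      (fun M' => (∏ j, if j = i then B (M j) (M' j) else if M j = M' j then 1 else 0) * F M'),
    Fintype.sum_prod_type]
  refine Finset.sum_congr rfl fun m' _ => ?_
  rw [Fintype.sum_eq_single (fun j : {j // j ≠ i} => M j.1)]
  · have h1 : (Equiv.piSplitAt i fun _ => Fin d).symm (m', fun j => M j.1)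
        = Function.update M i m' := by
      funext j
      by_cases h : j = i
      · subst h; simp [Equiv.piSplitAt, Function.update]
      · simp [Equiv.piSplitAt, Function.update, h]
    rw [h1]
    congr 1
    rw [Finset.prod_eq_single i]
    · simp [Function.update]
    · intro j _ hj
      simp [hj, Function.update_of_ne hj]
    · simp
  · intro g hg
    have : ∃ j : {j // j ≠ i}, g j ≠ M j.1 := by
      by_contra h
      push_neg at h
      exact hg (funext fun j => h j)
    obtain ⟨j, hj⟩ := this
    have hji : (j : Fin N) ≠ i := j.2
    have hcoord : (Equiv.piSplitAt i fun _ => Fin d).symm (m', g) (j : Fin N) = g j := by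
      simp [Equiv.piSplitAt, hji]
    rw [mul_eq_zero]
    left
    apply Finset.prod_eq_zero (Finset.mem_univ (j : Fin N))
    rw [if_neg hji, hcoord, if_neg (fun h => hj h.symm)]

lemma ofFn_update_eq_set {N : ℕ} {α : Type*} (f : Fin N → α) (i : Fin N) (a : α) :
    (List.ofFn (Function.update f i a)) = (List.ofFn f).set i a := by
  apply List.ext_getElem
  · simp
  · intro n h1 h2
    simp only [List.getElem_ofFn, List.getElem_set, List.getElem_ofFn]
    by_cases h : (i : ℕ) = n
    · have : (⟨n, by simpa using h1⟩ : Fin N) = i := by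
        ext; simp [h]
      rw [if_pos h, this, Function.update_self]
    · have : (⟨n, by simpa using h1⟩ : Fin N) ≠ i := by
        intro he; exact h (by simpa using (congrArg Fin.val he).symm)
      rw [if_neg h, Function.update_of_ne this]

set_option maxHeartbeats 1000000 in
theorem mps_infinitesimal_symmetry (d D : ℕ) (hd : 1 ≤ d) (hD : 1 ≤ D)
    (A : Fin d → Matrix (Fin D) (Fin D) ℂ)
    (B : Matrix (Fin d) (Fin d) ℂ) (X : Matrix (Fin D) (Fin D) ℂ)
    (hA : ∀ M, ∑ M', B M M' • A M' = X * A M - A M * X) :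
    ∀ N, 1 ≤ N →
      (∑ i : Fin N, siteOp B N i).mulVec (mpsPBC A N) = 0 := by
  intro N hN
  funext M
  set l : List (Matrix (Fin D) (Fin D) ℂ) := List.ofFn fun j => A (M j) with hl
  have hlen : l.length = N := by simp [hl]
  set f : ℕ → ℂ := fun k => Matrix.trace ((l.take k).prod * (X * (l.drop k).prod)) with hf
  have key : ∀ i : Fin N,
      ∑ M' : Fin N → Fin d, siteOp B N i M M' * mpsPBC A N M' = f i - f (i + 1) := by
    intro i
    have hi : (i : ℕ) < l.length := by rw [hlen]; exact i.2
    have hset : ∀ C, (l.set i C).prod = (l.take i).prod * C * (l.drop (i+1)).prod := by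
      intro C; rw [List.prod_set, if_pos hi]
    calc ∑ M', siteOp B N i M M' * mpsPBC A N M'
        = ∑ m' : Fin d, B (M i) m' * mpsPBC A N (Function.update M i m') :=
          sum_update_aux M i B (mpsPBC A N)
      _ = ∑ m' : Fin d, B (M i) m' • Matrix.trace ((l.set i (A m')).prod) := by
          refine Finset.sum_congr rfl fun m' _ => ?_
          unfold mpsPBC
          rw [smul_eq_mul]
          congr 2
          have he : (fun j => A (Function.update M i m' j))
              = Function.update (fun j => A (M j)) i (A m') := by
            funext j
            by_cases h : j = i
            · subst h; simp
            · simp [h]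
          rw [he, ofFn_update_eq_set]
      _ = Matrix.trace (∑ m' : Fin d,
            (l.take i).prod * (B (M i) m' • A m') * (l.drop (i+1)).prod) := by
          rw [Matrix.trace_sum]
          refine Finset.sum_congr rfl fun m' _ => ?_
          rw [hset, Matrix.mul_smul, Matrix.smul_mul, Matrix.trace_smul]
      _ = Matrix.trace ((l.take i).prod * (X * A (M i) - A (M i) * X) * (l.drop (i+1)).prod) := by
          rw [← Finset.sum_mul, ← Matrix.mul_sum, hA (M i)]
      _ = f i - f (i + 1) := by
          have hdrop : l.drop i = A (M i) :: l.drop (i+1) := by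
            rw [List.drop_eq_getElem_cons hi]; congr 1; simp [hl]
          have htake : (l.take ((i : ℕ)+1)).prod = (l.take i).prod * A (M i) := by
            rw [← List.take_concat_get hi, List.prod_concat]
            congr 1; simp [hl]
          rw [hf]
          simp only [hdrop, htake, List.prod_cons]
          rw [Matrix.mul_sub, Matrix.sub_mul, Matrix.trace_sub]
          congr 1 <;> simp only [Matrix.mul_assoc]
  have expand : ((∑ i : Fin N, siteOp B N i).mulVec (mpsPBC A N)) M
      = ∑ i : Fin N, ∑ M', siteOp B N i M M' * mpsPBC A N M' := by
    simp only [Matrix.mulVec, dotProduct, Matrix.sum_apply, Finset.sum_mul]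
    rw [Finset.sum_comm]
  rw [Pi.zero_apply, expand]
  simp only [key]
  rw [Fin.sum_univ_eq_sum_range (fun k => f k - f (k+1)) N, Finset.sum_range_sub']
  have h0 : f 0 = Matrix.trace (X * l.prod) := by simp [hf]
  have hN' : f N = Matrix.trace (l.prod * X) := by
    simp [hf, ← hlen]
  rw [h0, hN', Matrix.trace_mul_comm, sub_self]
end

section
/- Let A^{[M]} (M ∈ {0,…,d−1}) be complex D × D matrices and let h be a positive semidefinite Hermitian operator on ℂ^d ⊗ ℂ^d with matrix entries h_{(M_1,M_2),(M_1',M_2')}. Suppose that for all M_1, M_2 the D × D matrix Σ_{M_1',M_2'} h_{(M_1,M_2),(M_1',M_2')} A^{[M_1']} A^{[M_2']} is zero. Then for every N ≥ 2, the periodic-boundary MPS |Ψ_N⟩ defined by the A^{[M]} satisfies h_{i,i+1} |Ψ_N⟩ = 0 for every i ∈ {1,…,N} (site indices taken mod N), where h_{i,i+1} acts as h on the tensor factors i and i+1 and as identity elsewhere. Consequently H |Ψ_N⟩ = 0 for H = Σ_{i=1}^N h_{i,i+1}, and since ⟨φ, H φ⟩ ≥ 0 for all φ, |Ψ_N⟩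 (if nonzero) is a zero-energy ground state of the frustration-free Hamiltonian H. -/
open Matrix ComplexOrder

/-- The operator on `(ℂ^d)^{⊗N}` acting as the two-site operator `h` on tensor
factors `i` and `j` and as the identity on all other factors. -/
noncomputable def twoSiteOp {d : ℕ} (h : Matrix (Fin d × Fin d) (Fin d × Fin d) ℂ)
    (N : ℕ) (i j : Fin N) : Matrix (Fin N → Fin d) (Fin N → Fin d) ℂ :=
  Matrix.of fun M M' =>
    h (M i, M j) (M' i, M' j) *
      ∏ k ∈ (Finset.univ.erase i).erase j, (if M k = M' k then 1 else 0)

/- ### Auxiliary lemmas -/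

open Fin.CommRing

lemma updPair_apply_fst {d N : ℕ} {i j : Fin N} (hij : i ≠ j) (M : Fin N → Fin d)
    (p : Fin d × Fin d) :
    Function.update (Function.update M i p.1) j p.2 i = p.1 := by
  rw [Function.update_of_ne hij, Function.update_self]

lemma updPair_apply_snd {d N : ℕ} {i j : Fin N} (M : Fin N → Fin d)
    (p : Fin d × Fin d) :
    Function.update (Function.update M i p.1) j p.2 j = p.2 :=
  Function.update_self _ _ _

lemma updPair_apply_other {d N : ℕ} {i j : Fin N} (M : Fin N → Fin d)
    (p : Fin d × Fin d) {k : Fin N} (hki : k ≠ i) (hkj : k ≠ j) :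
    Function.update (Function.update M i p.1) j p.2 k = M k := by
  rw [Function.update_of_ne hkj, Function.update_of_ne hki]

lemma updPair_inj {d N : ℕ} {i j : Fin N} (hij : i ≠ j) (M : Fin N → Fin d) :
    Function.Injective
      (fun p : Fin d × Fin d => Function.update (Function.update M i p.1) j p.2) := by
  intro p q hpq
  have h1 := congrFun hpq i
  have h2 := congrFun hpq j
  simp only [updPair_apply_fst hij, updPair_apply_snd] at h1 h2
  exact Prod.ext h1 h2

/-- Summation against a product of Kronecker deltas reduces to a sum over the
two unconstrained sites. -/
lemma sum_delta {d N : ℕ} {i j : Fin N} (hij : i ≠ j) (M : Fin N → Fin d)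
    (f : (Fin N → Fin d) → ℂ) :
    ∑ M' : Fin N → Fin d,
      (∏ k ∈ (Finset.univ.erase i).erase j, (if M k = M' k then (1:ℂ) else 0)) * f M'
    = ∑ p : Fin d × Fin d, f (Function.update (Function.update M i p.1) j p.2) := by
  classical
  have hmem : ∀ k : Fin N, k ∈ (Finset.univ.erase i).erase j ↔ (k ≠ i ∧ k ≠ j) := by
    intro k; simp [Finset.mem_erase, and_comm]
  rw [← Finset.sum_image (s := Finset.univ) (f := f)
      (g := fun p : Fin d × Fin d => Function.update (Function.update M i p.1) j p.2)
      (fun p _ q _ h => updPair_inj hij M h)]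
  refine (Finset.sum_subset (Finset.subset_univ _) ?_).symm.trans
    (Finset.sum_congr rfl ?_)
  · intro M' _ hM'
    have : ∃ k, (k ≠ i ∧ k ≠ j) ∧ M k ≠ M' k := by
      by_contra hc
      push_neg at hc
      apply hM'
      rw [Finset.mem_image]
      refine ⟨(M' i, M' j), Finset.mem_univ _, ?_⟩
      funext k
      by_cases hki : k = i
      · subst hki; exact updPair_apply_fst hij M _
      by_cases hkj : k = j
      · subst hkj; exact updPair_apply_snd M _
      · rw [updPair_apply_other M _ hki hkj]
        exact hc k ⟨hki, hkj⟩
    obtain ⟨k, hk1, hk2⟩ := this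
    rw [Finset.prod_eq_zero (f := fun k => if M k = M' k then (1:ℂ) else 0)
      ((hmem k).2 hk1) (if_neg hk2), zero_mul]
  · intro M' hM'
    rw [Finset.mem_image] at hM'
    obtain ⟨p, _, rfl⟩ := hM'
    rw [Finset.prod_eq_one, one_mul]
    intro k hk
    rw [if_pos]
    exact (updPair_apply_other M p ((hmem k).1 hk).1 ((hmem k).1 hk).2).symm

/-- The trace of a cyclic product is invariant under a shift by one. -/
lemma trace_ofFn_shift_one {D n : ℕ} (f : Fin (n+1) → Matrix (Fin D) (Fin D) ℂ) :
    Matrix.trace (List.ofFn (fun t => f (t + 1))).prod = Matrix.trace (List.ofFn f).prod := by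
  have h1 : Fin.last n + 1 = 0 := by
    apply Fin.ext
    simp [Fin.last, Fin.add_def]
  have h2 : ∀ i : Fin n, (Fin.castSucc i + 1) = i.succ := by
    intro i
    apply Fin.ext
    simp [Fin.add_def, Fin.castSucc, Nat.mod_eq_of_lt (Nat.succ_lt_succ i.isLt)]
  rw [List.ofFn_succ' (fun t => f (t + 1)), List.ofFn_succ (f := f)]
  simp only [h1, h2]
  rw [List.concat_eq_append, List.prod_append, List.prod_cons, List.prod_cons,
    List.prod_nil, mul_one, Matrix.trace_mul_comm]

lemma trace_ofFn_shift_nat {D n : ℕ} (m : ℕ) (f : Fin (n+1) → Matrix (Fin D) (Fin D) ℂ) :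
    Matrix.trace (List.ofFn (fun t => f (t + (m : Fin (n+1))))).prod
      = Matrix.trace (List.ofFn f).prod := by
  induction m with
  | zero => simp
  | succ m ih =>
    have h : (fun t : Fin (n+1) => f (t + ((m+1 : ℕ) : Fin (n+1))))
        = fun t => (fun s => f (s + (m : Fin (n+1)))) (t + 1) := by
      funext t
      show f _ = f _
      push_cast
      ring_nf
    rw [h, trace_ofFn_shift_one (fun s => f (s + (m : Fin (n+1)))), ih]

/-- The trace of a cyclic product is invariant under arbitrary shifts. -/
lemma trace_ofFn_shift {D n : ℕ} (c : Fin (n+1)) (f : Fin (n+1) → Matrix (Fin D) (Fin D) ℂ) :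
    Matrix.trace (List.ofFn (fun t => f (t + c))).prod = Matrix.trace (List.ofFn f).prod := by
  have := trace_ofFn_shift_nat c.val f
  rwa [Fin.cast_val_eq_self] at this

/-- Key computation: each nearest-neighbor term annihilates the MPS. -/
lemma key_annihilate {d D n : ℕ} (A : Fin d → Matrix (Fin D) (Fin D) ℂ)
    (h : Matrix (Fin d × Fin d) (Fin d × Fin d) ℂ)
    (hker : ∀ M1 M2 : Fin d, ∑ p : Fin d × Fin d, h (M1, M2) p • (A p.1 * A p.2) = 0)
    (i : Fin (n+2)) :
    (twoSiteOp h (n+2) i (i+1)).mulVec (mpsPBC A (n+2)) = 0 := by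
  have hij : i ≠ i + 1 := fun hc => succ_ne_self i hc.symm
  funext M
  simp only [Matrix.mulVec, dotProduct, twoSiteOp, Matrix.of_apply, Pi.zero_apply]
  have step1 : ∀ M' : Fin (n+2) → Fin d,
      h (M i, M (i+1)) (M' i, M' (i+1)) *
        (∏ k ∈ (Finset.univ.erase i).erase (i+1), (if M k = M' k then (1:ℂ) else 0))
        * mpsPBC A (n+2) M'
      = (∏ k ∈ (Finset.univ.erase i).erase (i+1), (if M k = M' k then (1:ℂ) else 0)) *
        (h (M i, M (i+1)) (M' i, M' (i+1)) * mpsPBC A (n+2) M') := by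
    intro M'; ring
  calc ∑ M', h (M i, M (i+1)) (M' i, M' (i+1)) *
        (∏ k ∈ (Finset.univ.erase i).erase (i+1), (if M k = M' k then (1:ℂ) else 0))
        * mpsPBC A (n+2) M'
      = ∑ p : Fin d × Fin d, h (M i, M (i+1)) p *
          mpsPBC A (n+2) (Function.update (Function.update M i p.1) (i+1) p.2) := by
        rw [Finset.sum_congr rfl (fun M' _ => step1 M'), sum_delta hij M]
        refine Finset.sum_congr rfl fun p _ => ?_
        rw [updPair_apply_fst hij, updPair_apply_snd]
    _ = 0 := by
        have hne0 : ∀ t : Fin n, (t.succ.succ : Fin (n+2)) ≠ 0 := by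
          intro t hc
          have := congrArg Fin.val hc
          simp [Fin.val_succ] at this
        have hne1 : ∀ t : Fin n, (t.succ.succ : Fin (n+2)) ≠ 1 := by
          intro t hc
          have := congrArg Fin.val hc
          simp [Fin.val_succ, Fin.ext_iff] at this
        have hrot : ∀ p : Fin d × Fin d,
            mpsPBC A (n+2) (Function.update (Function.update M i p.1) (i+1) p.2)
            = Matrix.trace (A p.1 * (A p.2 *
              (List.ofFn fun t : Fin n =>
                A (M (t.succ.succ + i))).prod)) := by
          intro p
          set e : Fin (n+2) → Fin d := Function.update (Function.update M i p.1) (i+1) p.2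
            with he
          have v0 : e ((0 : Fin (n+2)) + i) = p.1 := by
            rw [zero_add, he, updPair_apply_fst hij]
          have h01 : (Fin.succ (0 : Fin (n+1)) : Fin (n+2)) = 1 := by
            apply Fin.ext; simp
          have hs : (Fin.succ (0 : Fin (n+1))) + i = i + 1 := by
            rw [h01]; exact add_comm 1 i
          have v1 : e ((Fin.succ (0 : Fin (n+1))) + i) = p.2 :=
            (congrArg e hs).trans (by rw [he]; exact updPair_apply_snd M p)
          have vt : ∀ t : Fin n, e ((t.succ.succ : Fin (n+2)) + i) = M (t.succ.succ + i) := by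
            intro t
            rw [he]
            apply updPair_apply_other
            · intro hc
              apply hne0 t
              have : (t.succ.succ : Fin (n+2)) + i = 0 + i := by rw [zero_add, hc]
              exact add_right_cancel this
            · intro hc
              apply hne1 t
              have h1i : (1 : Fin (n+2)) + i = i + 1 := add_comm 1 i
              have : (t.succ.succ : Fin (n+2)) + i = 1 + i := by rw [h1i, hc]
              exact add_right_cancel this
          rw [mpsPBC, ← trace_ofFn_shift (n := n+1) i (fun k => A (e k))]
          rw [List.ofFn_succ, List.prod_cons, List.ofFn_succ, List.prod_cons]
          simp only [v0, v1, vt]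
        simp only [hrot]
        have hC := congrArg (fun X => Matrix.trace (X *
          (List.ofFn fun t : Fin n => A (M (t.succ.succ + i))).prod)) (hker (M i) (M (i+1)))
        simpa only [Finset.sum_mul, smul_mul_assoc, Matrix.trace_sum, Matrix.trace_smul,
          smul_eq_mul, Matrix.mul_assoc, Matrix.zero_mul, Matrix.trace_zero] using hC

/-- The two-site operator built from `Bᴴ * B` factors accordingly. -/
lemma twoSiteOp_factor {d N : ℕ} {i j : Fin N} (hij : i ≠ j)
    (B : Matrix (Fin d × Fin d) (Fin d × Fin d) ℂ) :
    twoSiteOp (Bᴴ * B) N i j = (twoSiteOp B N i j)ᴴ * twoSiteOp B N i j := by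
  ext M M'
  simp only [twoSiteOp, Matrix.mul_apply, Matrix.conjTranspose_apply, Matrix.of_apply]
  have hmem : ∀ k : Fin N, k ∈ (Finset.univ.erase i).erase j → (k ≠ i ∧ k ≠ j) := by
    intro k hk
    simp only [Finset.mem_erase, Finset.mem_univ, and_true] at hk
    exact ⟨hk.2, hk.1⟩
  have flip : ∀ (K : Fin N → Fin d),
      (∏ k ∈ (Finset.univ.erase i).erase j, (if K k = M k then (1:ℂ) else 0))
      = ∏ k ∈ (Finset.univ.erase i).erase j, (if M k = K k then (1:ℂ) else 0) := by
    intro K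
    refine Finset.prod_congr rfl fun k _ => ?_
    by_cases hk : M k = K k
    · rw [if_pos hk, if_pos hk.symm]
    · rw [if_neg (fun hc => hk hc.symm), if_neg hk]
  have hterm : ∀ K : Fin N → Fin d,
      star (B (K i, K j) (M i, M j) *
          ∏ k ∈ (Finset.univ.erase i).erase j, (if K k = M k then (1:ℂ) else 0)) *
        (B (K i, K j) (M' i, M' j) *
          ∏ k ∈ (Finset.univ.erase i).erase j, (if K k = M' k then (1:ℂ) else 0))
      = (∏ k ∈ (Finset.univ.erase i).erase j, (if M k = K k then (1:ℂ) else 0)) *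
        (star (B (K i, K j) (M i, M j)) *
          (B (K i, K j) (M' i, M' j) *
            ∏ k ∈ (Finset.univ.erase i).erase j, (if K k = M' k then (1:ℂ) else 0))) := by
    intro K
    rw [star_mul', star_prod]
    simp only [apply_ite (star : ℂ → ℂ), star_one, star_zero]
    rw [flip K]
    ring
  rw [Finset.sum_congr rfl (fun K _ => hterm K),
    sum_delta hij M (fun K => star (B (K i, K j) (M i, M j)) *
      (B (K i, K j) (M' i, M' j) *
        ∏ k ∈ (Finset.univ.erase i).erase j, (if K k = M' k then (1:ℂ) else 0)))]
  have hprod : ∀ p : Fin d × Fin d,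
      (∏ k ∈ (Finset.univ.erase i).erase j,
        (if Function.update (Function.update M i p.1) j p.2 k = M' k then (1:ℂ) else 0))
      = ∏ k ∈ (Finset.univ.erase i).erase j, (if M k = M' k then (1:ℂ) else 0) := by
    intro p
    refine Finset.prod_congr rfl fun k hk => ?_
    rw [updPair_apply_other M p (hmem k hk).1 (hmem k hk).2]
  simp only [updPair_apply_fst hij, updPair_apply_snd, hprod, Prod.mk.eta]
  rw [Finset.sum_mul]
  exact Finset.sum_congr rfl fun q _ => by ring

lemma mulVec_sum {α : Type*} [Fintype α] {ι : Type*} (s : Finset ι)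
    (H : ι → Matrix α α ℂ) (φ : α → ℂ) :
    (∑ i ∈ s, H i).mulVec φ = ∑ i ∈ s, (H i).mulVec φ := by
  funext x
  simp only [Matrix.mulVec, dotProduct, Finset.sum_apply, Matrix.sum_apply, Finset.sum_mul]
  rw [Finset.sum_comm]

lemma dot_sum {α : Type*} [Fintype α] {ι : Type*} (s : Finset ι)
    (v : ι → (α → ℂ)) (φ : α → ℂ) :
    star φ ⬝ᵥ (∑ i ∈ s, v i) = ∑ i ∈ s, star φ ⬝ᵥ v i := by
  simp only [dotProduct, Finset.sum_apply, Finset.mul_sum]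
  rw [Finset.sum_comm]

theorem mps_parent_hamiltonian_ground_state (d D : ℕ) (hd : 1 ≤ d) (hD : 1 ≤ D)
    (A : Fin d → Matrix (Fin D) (Fin D) ℂ)
    (h : Matrix (Fin d × Fin d) (Fin d × Fin d) ℂ) (hpsd : h.PosSemidef)
    (hker : ∀ M1 M2 : Fin d, ∑ p : Fin d × Fin d, h (M1, M2) p • (A p.1 * A p.2) = 0) :
    ∀ N, ∀ hN : 2 ≤ N,
      (∀ i : Fin N,
        (twoSiteOp h N i ⟨((i : ℕ) + 1) % N, Nat.mod_lt _ (by omega)⟩).mulVec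
          (mpsPBC A N) = 0) ∧
      (∑ i : Fin N,
        twoSiteOp h N i ⟨((i : ℕ) + 1) % N, Nat.mod_lt _ (by omega)⟩).mulVec
          (mpsPBC A N) = 0 ∧
      ∀ φ : (Fin N → Fin d) → ℂ,
        0 ≤ star φ ⬝ᵥ (∑ i : Fin N,
          twoSiteOp h N i ⟨((i : ℕ) + 1) % N, Nat.mod_lt _ (by omega)⟩).mulVec φ := by
  intro N hN
  obtain ⟨n, rfl⟩ : ∃ n, N = n + 2 := ⟨N - 2, by omega⟩
  have hj : ∀ i : Fin (n+2),
      (⟨((i : ℕ) + 1) % (n+2), Nat.mod_lt _ (by omega)⟩ : Fin (n+2)) = i + 1 := by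
    intro i
    apply Fin.ext
    simp [Fin.add_def]
  have hz : ∀ i : Fin (n+2),
      (twoSiteOp h (n+2) i (i+1)).mulVec (mpsPBC A (n+2)) = 0 :=
    key_annihilate A h hker
  have hij : ∀ i : Fin (n+2), i ≠ i + 1 := fun i hc => succ_ne_self i hc.symm
  refine ⟨?_, ?_, ?_⟩
  · intro i
    rw [hj i]
    exact hz i
  · simp only [hj]
    rw [_root_.mulVec_sum]
    simp [hz]
  · intro φ
    simp only [hj]
    rw [_root_.mulVec_sum, dot_sum]
    refine Finset.sum_nonneg fun i _ => ?_
    obtain ⟨B, hB⟩ : ∃ B : Matrix (Fin d × Fin d) (Fin d × Fin d) ℂ, h = Bᴴ * B := by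
      classical
      open MatrixOrder in
      obtain ⟨X, hX, -, hXX⟩ := sub_zero h ▸
        CFC.exists_sqrt_of_isSelfAdjoint_of_quasispectrumRestricts hpsd.isHermitian
          (QuasispectrumRestricts.nnreal_of_nonneg hpsd.nonneg)
      exact ⟨X, by rw [sub_zero] at hXX; rw [← hXX, ← Matrix.star_eq_conjTranspose, hX.star_eq]⟩
    rw [hB, twoSiteOp_factor (hij i) B]
    exact (Matrix.posSemidef_conjTranspose_mul_self (twoSiteOp B (n+2) i (i+1))).dotProduct_mulVec_nonneg φ
end

section
/- For every N ≥ 3, the periodic-boundary spin-1 AKLT state |Ψ_N⟩ ∈ (ℂ³)^{⊗N} is a nonzero vector satisfying H_AKLT |Ψ_N⟩ = 0, where H_AKLT = Σ_{i=1}^{N} (P_2)_{i,i+1} (indices mod N) and (P_2)_{i,i+1} acts as P_2 = (1/3)·𝟙 + (1/2)·Θ + (1/6)·Θ² on the tensor factors i, i+1 and as identity elsewhere. Since H_AKLT is a sum of orthogonal projectors and hence positive semidefinite, |Ψ_N⟩ is a zero-energy ground state of H_AKLT. -/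
open Matrix Kronecker ComplexOrder

/-!
STATEMENT 13: For every `N ≥ 3`, the periodic-boundary spin-1 AKLT state is a nonzero
vector annihilated by the AKLT Hamiltonian `H = Σ_{i=1}^N (P_2)_{i,i+1}` (indices mod
`N`), which is positive semidefinite; hence it is a zero-energy ground state.
-/

/-- The spin-1 AKLT Kraus operators: index `0 ↦ M = +1`, `1 ↦ M = 0`, `2 ↦ M = −1`. -/
noncomputable def akltA : Fin 3 → Matrix (Fin 2) (Fin 2) ℂ
  | 0 => (Real.sqrt (2 / 3) : ℂ) • !![0, 1; 0, 0]
  | 1 => -((Real.sqrt 3 : ℂ))⁻¹ • !![1, 0; 0, -1]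
  | 2 => -(Real.sqrt (2 / 3) : ℂ) • !![0, 0; 1, 0]

/-- The spin-1 matrices on `ℂ³` (basis ordered by `S_z`-eigenvalue `+1, 0, −1`):
index `0 ↦ S_x`, `1 ↦ S_y`, `2 ↦ S_z`. -/
noncomputable def spin1 : Fin 3 → Matrix (Fin 3) (Fin 3) ℂ
  | 0 => ((Real.sqrt 2 : ℂ))⁻¹ • !![0, 1, 0; 1, 0, 1; 0, 1, 0]
  | 1 => ((Real.sqrt 2 : ℂ))⁻¹ •
      !![0, -Complex.I, 0; Complex.I, 0, -Complex.I; 0, Complex.I, 0]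
  | 2 => !![1, 0, 0; 0, 0, 0; 0, 0, -1]

/-- `Θ = S_x ⊗ S_x + S_y ⊗ S_y + S_z ⊗ S_z` on `ℂ³ ⊗ ℂ³`. -/
noncomputable def Theta : Matrix (Fin 3 × Fin 3) (Fin 3 × Fin 3) ℂ :=
  ∑ α : Fin 3, spin1 α ⊗ₖ spin1 α

/-- `P_2 = (1/3)·𝟙 + (1/2)·Θ + (1/6)·Θ²`, the projector onto the total-spin-2
subspace of two spin-1 particles. -/
noncomputable def P2 : Matrix (Fin 3 × Fin 3) (Fin 3 × Fin 3) ℂ :=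
  (1 / 3 : ℂ) • 1 + (1 / 2 : ℂ) • Theta + (1 / 6 : ℂ) • (Theta * Theta)

/-! ### Auxiliary machinery -/

/-- Index encoding `Fin 3 × Fin 3 ≃ Fin 9`. -/
def enc9 : Fin 3 × Fin 3 → Fin 9 := fun p => ⟨p.1.val * 3 + p.2.val, by omega⟩

/-- The explicit numeric matrix of `Θ`. -/
noncomputable def T9 : Matrix (Fin 9) (Fin 9) ℂ :=
 !![1,0,0, 0,0,0, 0,0,0;
    0,0,0, 1,0,0, 0,0,0;
    0,0,-1, 0,1,0, 0,0,0;
    0,1,0, 0,0,0, 0,0,0;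
    0,0,1, 0,0,0, 1,0,0;
    0,0,0, 0,0,0, 0,1,0;
    0,0,0, 0,1,0, -1,0,0;
    0,0,0, 0,0,1, 0,0,0;
    0,0,0, 0,0,0, 0,0,1]

/-- The explicit numeric matrix of `P₂`. -/
noncomputable def P9 : Matrix (Fin 9) (Fin 9) ℂ :=
 !![1,0,0, 0,0,0, 0,0,0;
    0,1/2,0, 1/2,0,0, 0,0,0;
    0,0,1/6, 0,1/3,0, 1/6,0,0;
    0,1/2,0, 1/2,0,0, 0,0,0;
    0,0,1/3, 0,2/3,0, 1/3,0,0;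
    0,0,0, 0,0,1/2, 0,1/2,0;
    0,0,1/6, 0,1/3,0, 1/6,0,0;
    0,0,0, 0,0,1/2, 0,1/2,0;
    0,0,0, 0,0,0, 0,0,1]

set_option maxHeartbeats 1000000 in
lemma theta_ex : Theta = Matrix.of fun p q => T9 (enc9 p) (enc9 q) := by
  have h2 : ((Real.sqrt 2 : ℂ))⁻¹ * ((Real.sqrt 2 : ℂ))⁻¹ = 1/2 := by
    rw [← mul_inv]
    norm_cast
    rw [Real.mul_self_sqrt (by norm_num)]
    norm_num
  ext ⟨a,b⟩ ⟨c,d⟩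
  fin_cases a <;> fin_cases b <;> fin_cases c <;> fin_cases d <;>
    · simp only [Theta, Matrix.sum_apply, Fin.sum_univ_three, Matrix.kroneckerMap_apply,
        spin1, Matrix.smul_apply, Matrix.of_apply, enc9, T9]
      norm_num [Matrix.cons_val_zero, Matrix.cons_val_one, Matrix.head_cons, Fin.mk_zero,
        Fin.mk_one, Complex.ext_iff]
      try ring_nf
      try simp [h2]
      try ring_nf

set_option maxHeartbeats 1000000 in
lemma p2_ex : P2 = Matrix.of fun p q => P9 (enc9 p) (enc9 q) := by
  rw [P2, theta_ex]
  ext ⟨a,b⟩ ⟨c,d⟩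
  simp only [Matrix.add_apply, Matrix.smul_apply, Matrix.mul_apply, Matrix.of_apply,
    Fintype.sum_prod_type, Fin.sum_univ_three, Matrix.one_apply, smul_eq_mul]
  fin_cases a <;> fin_cases b <;> fin_cases c <;> fin_cases d <;>
    norm_num [T9, P9, enc9, Prod.ext_iff, Fin.ext_iff]

set_option maxHeartbeats 1000000 in
lemma p2_herm : P2ᴴ = P2 := by
  rw [p2_ex]
  ext ⟨a,b⟩ ⟨c,d⟩
  simp only [Matrix.conjTranspose_apply, Matrix.of_apply]
  fin_cases a <;> fin_cases b <;> fin_cases c <;> fin_cases d <;>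
    norm_num [P9, enc9, Complex.ext_iff]

set_option maxHeartbeats 1000000 in
lemma p2_idem : P2 * P2 = P2 := by
  rw [p2_ex]
  ext ⟨a,b⟩ ⟨c,d⟩
  simp only [Matrix.mul_apply, Matrix.of_apply, Fintype.sum_prod_type, Fin.sum_univ_three]
  fin_cases a <;> fin_cases b <;> fin_cases c <;> fin_cases d <;>
    norm_num [P9, enc9]

set_option maxHeartbeats 1000000 in
/-- The core relation: `P₂` annihilates the two-site AKLT tensor. -/
lemma aklt_core (c d : Fin 3) :
    ∑ a : Fin 3, ∑ b : Fin 3, P2 (c, d) (a, b) • (akltA a * akltA b) = 0 := by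
  have hs : (Real.sqrt (2/3) : ℂ) * (Real.sqrt (2/3) : ℂ) = 2/3 := by
    norm_cast; rw [Real.mul_self_sqrt (by norm_num)]; norm_num
  have hs2 : ((Real.sqrt 2 : ℝ) : ℂ)^2 = 2 := by
    norm_cast; rw [Real.sq_sqrt (by norm_num)]
  have ht2 : (((Real.sqrt 3 : ℝ) : ℂ))⁻¹^2 = 1/3 := by
    rw [sq, ← mul_inv]; norm_cast; rw [Real.mul_self_sqrt (by norm_num)]; norm_num
  have ht : ((Real.sqrt 3 : ℂ))⁻¹ * ((Real.sqrt 3 : ℂ))⁻¹ = 1/3 := by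
    rw [← mul_inv]; norm_cast; rw [Real.mul_self_sqrt (by norm_num)]; norm_num
  rw [p2_ex]
  fin_cases c <;> fin_cases d <;>
    · simp only [Matrix.of_apply, Fin.sum_univ_three, akltA, enc9, P9]
      norm_num
      ext i j
      fin_cases i <;> fin_cases j <;>
        · simp [Matrix.mul_apply, Fin.sum_univ_two]
          try ring_nf
          try simp [hs2, ht2, hs, ht]
          try ring_nf
          try norm_num

/-- Restricting a configuration to sites `(i, j)` and the rest. -/
def resEquiv {N d : ℕ} (i j : Fin N) (hij : i ≠ j) :
    (Fin N → Fin d) ≃ (Fin d × Fin d) × ({k : Fin N // k ≠ i ∧ k ≠ j} → Fin d) where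
  toFun M := ((M i, M j), fun k => M k.1)
  invFun p := fun k => if h : k = i then p.1.1 else if h' : k = j then p.1.2 else p.2 ⟨k, h, h'⟩
  left_inv M := by
    funext k
    by_cases h : k = i
    · subst h; simp
    · by_cases h' : k = j
      · subst h'; simp [h]
      · simp [h, h']
  right_inv p := by
    refine Prod.ext (Prod.ext ?_ ?_) (funext fun k => ?_)
    · simp
    · simp [Ne.symm hij]
    · simp [k.2.1, k.2.2]

lemma delta_prod {N d : ℕ} (i j : Fin N) (M M' : Fin N → Fin d) :
    (∏ k ∈ (Finset.univ.erase i).erase j, (if M k = M' k then (1:ℂ) else 0)) =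
      if ((fun k : {k : Fin N // k ≠ i ∧ k ≠ j} => M k.1) =
          fun k : {k : Fin N // k ≠ i ∧ k ≠ j} => M' k.1) then 1 else 0 := by
  by_cases hMM : (fun k : {k : Fin N // k ≠ i ∧ k ≠ j} => M k.1) =
      fun k : {k : Fin N // k ≠ i ∧ k ≠ j} => M' k.1
  · rw [if_pos hMM]
    refine Finset.prod_eq_one fun k hk => ?_
    simp only [Finset.mem_erase, Finset.mem_univ, and_true] at hk
    rw [if_pos (congrFun hMM ⟨k, hk.2, hk.1⟩)]
  · rw [if_neg hMM]
    have : ∃ k : {k : Fin N // k ≠ i ∧ k ≠ j}, M k.1 ≠ M' k.1 := by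
      by_contra hc
      push_neg at hc
      exact hMM (funext fun k => hc k)
    obtain ⟨k, hk⟩ := this
    refine Finset.prod_eq_zero (i := k.1) (by simp [k.2.1, k.2.2]) ?_
    rw [if_neg hk]

lemma twoSiteOp_eq_submatrix {N d : ℕ} (h : Matrix (Fin d × Fin d) (Fin d × Fin d) ℂ)
    (i j : Fin N) (hij : i ≠ j) :
    twoSiteOp h N i j =
      Matrix.submatrix (h ⊗ₖ (1 : Matrix ({k : Fin N // k ≠ i ∧ k ≠ j} → Fin d)
        ({k : Fin N // k ≠ i ∧ k ≠ j} → Fin d) ℂ)) (resEquiv i j hij) (resEquiv i j hij) := by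
  ext M M'
  simp only [twoSiteOp, Matrix.of_apply, Matrix.submatrix_apply, Matrix.kroneckerMap_apply,
    resEquiv, Equiv.coe_fn_mk, Matrix.one_apply, delta_prod i j M M']

lemma twoSiteOp_mulVec {N d : ℕ} (h : Matrix (Fin d × Fin d) (Fin d × Fin d) ℂ)
    (i j : Fin N) (hij : i ≠ j) (ψ : (Fin N → Fin d) → ℂ) (M : Fin N → Fin d) :
    (twoSiteOp h N i j).mulVec ψ M =
      ∑ a : Fin d, ∑ b : Fin d, h (M i, M j) (a, b) *
        ψ (fun k => if k = i then a else if k = j then b else M k) := by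
  have hvi : ∀ (a b : Fin d) f, (resEquiv i j hij).symm ((a, b), f) i = a := by
    intro a b f; simp [resEquiv]
  have hvj : ∀ (a b : Fin d) f, (resEquiv i j hij).symm ((a, b), f) j = b := by
    intro a b f; simp [resEquiv, Ne.symm hij]
  have hres : ∀ (a b : Fin d) f,
      (fun k : {k : Fin N // k ≠ i ∧ k ≠ j} => (resEquiv i j hij).symm ((a, b), f) k.1) = f := by
    intro a b f; funext k; simp [resEquiv, k.2.1, k.2.2]
  rw [Matrix.mulVec, dotProduct,
    ← Equiv.sum_comp (resEquiv (d := d) i j hij).symm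
      (fun M' => twoSiteOp h N i j M M' * ψ M'), Fintype.sum_prod_type,
    Fintype.sum_prod_type]
  refine Finset.sum_congr rfl fun a _ => Finset.sum_congr rfl fun b _ => ?_
  simp only [twoSiteOp, Matrix.of_apply, hvi, hvj, delta_prod i j M, hres]
  rw [Finset.sum_eq_single ((fun k : {k : Fin N // k ≠ i ∧ k ≠ j} => M k.1))]
  · rw [if_pos rfl, mul_one]
    congr 1
  · intro f _ hf
    rw [if_neg (Ne.symm hf), mul_zero, zero_mul]
  · intro hmem; exact absurd (Finset.mem_univ _) hmem

lemma trace_rotate {D : ℕ} (l : List (Matrix (Fin D) (Fin D) ℂ)) (r : ℕ) :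
    ((l.rotate r).prod).trace = l.prod.trace := by
  rcases eq_or_ne l [] with rfl | hne
  · simp
  · have hl : l.length ≠ 0 := by simpa using hne
    rw [← List.rotate_mod, List.rotate_eq_drop_append_take (Nat.mod_lt _ (by omega)).le,
      List.prod_append, Matrix.trace_mul_comm, ← List.prod_append, List.take_append_drop]

lemma ofFn_shift {D : ℕ} {N : ℕ} [NeZero N] (B : Fin N → Matrix (Fin D) (Fin D) ℂ) (r : Fin N) :
    List.ofFn (fun k => B (k + r)) = (List.ofFn B).rotate r.val := by
  apply List.ext_get
  · simp
  · intro m h1 h2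
    rw [List.get_ofFn, List.get_rotate, List.get_ofFn]
    refine congrArg B (Fin.ext ?_)
    simp [Fin.add_def]

lemma psi_shift {d D N : ℕ} [NeZero N] (A : Fin d → Matrix (Fin D) (Fin D) ℂ)
    (M : Fin N → Fin d) (r : Fin N) :
    mpsPBC A N (fun k => M (k + r)) = mpsPBC A N M := by
  unfold mpsPBC
  rw [ofFn_shift (fun k => A (M k)) r, trace_rotate]

lemma akltA_one_pow (n : ℕ) :
    (akltA 1)^n = ((-((Real.sqrt 3 : ℂ))⁻¹)^n) • !![1, 0; 0, (-1 : ℂ)^n] := by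
  induction n with
  | zero => simp [Matrix.one_fin_two]
  | succ m ih =>
    rw [pow_succ, ih]
    show _ = (_ : Matrix (Fin 2) (Fin 2) ℂ)
    simp only [akltA, Matrix.smul_mul, Matrix.mul_smul, smul_smul]
    rw [show (!![1, 0; 0, (-1:ℂ)^m] * !![1, 0; 0, -1]) = !![1, 0; 0, (-1:ℂ)^(m+1)] by
      ext i j; fin_cases i <;> fin_cases j <;> simp [Matrix.mul_apply, Fin.sum_univ_two, pow_succ]]
    congr 1
    ring

lemma mps_ne_zero (n : ℕ) : mpsPBC akltA (n+2) ≠ 0 := by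
  intro hzero
  set M : Fin (n+2) → Fin 3 := fun k => if k = 0 then 0 else if k = 1 then 2 else 1 with hM
  have h1 : mpsPBC akltA (n+2) M = 0 := by rw [hzero]; rfl
  have h2 : mpsPBC akltA (n+2) M =
      Matrix.trace (akltA 0 * (akltA 2 * (akltA 1)^n)) := by
    unfold mpsPBC
    rw [List.ofFn_succ, List.ofFn_succ, List.prod_cons, List.prod_cons]
    have e0 : M 0 = 0 := by simp [hM]
    have e1 : M (Fin.succ 0) = 2 := by
      have : (Fin.succ 0 : Fin (n+2)) = 1 := rfl
      simp [hM, this]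
    have e2 : ∀ k : Fin n, M (Fin.succ (Fin.succ k)) = 1 := by
      intro k
      have h0 : (Fin.succ (Fin.succ k) : Fin (n+2)) ≠ 0 := Fin.succ_ne_zero _
      have h1' : (Fin.succ (Fin.succ k) : Fin (n+2)) ≠ 1 := by
        intro hcon
        have : (Fin.succ k : Fin (n+1)) = 0 := by
          apply Fin.succ_injective
          rw [hcon]; rfl
        exact Fin.succ_ne_zero _ this
      simp [hM, h0, h1']
    rw [e0, e1]
    congr 1
    congr 1
    rw [show (fun k : Fin n => akltA (M (Fin.succ (Fin.succ k)))) =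
        (fun _ : Fin n => akltA 1) from funext fun k => by rw [e2]]
    rw [List.ofFn_const, List.prod_replicate]
  rw [h2] at h1
  have hs : (Real.sqrt (2/3) : ℂ) * (Real.sqrt (2/3) : ℂ) = 2/3 := by
    norm_cast; rw [Real.mul_self_sqrt (by norm_num)]; norm_num
  rw [akltA_one_pow] at h1
  simp only [akltA, Matrix.smul_mul, Matrix.mul_smul, smul_smul, Matrix.trace_smul] at h1
  rw [show (!![0,0;1,0] * !![1, 0; 0, (-1:ℂ)^n]) = !![0,0;1,0] by
      ext i j; fin_cases i <;> fin_cases j <;> simp [Matrix.mul_apply, Fin.sum_univ_two],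
    show (!![0,1;0,0] * !![0,0;1,(0:ℂ)]) = !![1,0;0,0] by
      ext i j; fin_cases i <;> fin_cases j <;> simp [Matrix.mul_apply, Fin.sum_univ_two]] at h1
  have htr : Matrix.trace !![(1:ℂ),0;0,0] = 1 := by
    simp [Matrix.trace_fin_two]
  rw [htr] at h1
  have h3 : (Real.sqrt (2/3) : ℂ) ≠ 0 := by
    norm_cast
    exact Real.sqrt_ne_zero'.2 (by norm_num)
  have h4 : ((Real.sqrt 3 : ℂ))⁻¹ ≠ 0 := by
    refine inv_ne_zero ?_
    norm_cast
    exact Real.sqrt_ne_zero'.2 (by norm_num)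
  rw [smul_eq_mul, mul_one] at h1
  have h5 : (-((Real.sqrt 3 : ℂ))⁻¹)^n ≠ 0 := pow_ne_zero _ (neg_ne_zero.2 h4)
  exact mul_ne_zero (mul_ne_zero h5 (neg_ne_zero.2 h3)) h3 h1

lemma site_annihilate {n : ℕ} (i : Fin (n+2)) (M : Fin (n+2) → Fin 3) :
    (twoSiteOp P2 (n+2) i (i+1)).mulVec (mpsPBC akltA (n+2)) M = 0 := by
  have h10 : (1 : Fin (n+2)) ≠ 0 := by
    intro hcon
    simpa using congrArg Fin.val hcon
  have hij : i ≠ i + 1 := by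
    intro hcon
    have hcon' : i + 0 = i + 1 := by simpa using hcon
    exact h10 (add_left_cancel hcon').symm
  rw [twoSiteOp_mulVec _ _ _ hij]
  set R : Matrix (Fin 2) (Fin 2) ℂ :=
    (List.ofFn (fun k : Fin n => akltA (M (Fin.succ (Fin.succ k) + i)))).prod with hR
  have key : ∀ a b : Fin 3,
      mpsPBC akltA (n+2) (fun k => if k = i then a else if k = i + 1 then b else M k)
        = Matrix.trace (akltA a * (akltA b * R)) := by
    intro a b
    rw [← psi_shift akltA (fun k => if k = i then a else if k = i + 1 then b else M k) i]
    have hfun : (fun k : Fin (n+2) =>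
          (fun k' => if k' = i then a else if k' = i + 1 then b else M k') (k + i))
        = fun k : Fin (n+2) => if k = 0 then a else if k = 1 then b else M (k + i) := by
      funext k
      simp only []
      have c1 : (k + i = i) ↔ k = 0 := by
        constructor
        · intro hc
          have : k + i = 0 + i := by rw [zero_add]; exact hc
          exact add_right_cancel this
        · intro hc; rw [hc, zero_add]
      have c2 : (k + i = i + 1) ↔ k = 1 := by
        rw [add_comm i 1]
        constructor
        · intro hc; exact add_right_cancel hc
        · intro hc; rw [hc]
      rw [show (if k + i = i then a else if k + i = i + 1 then b else M (k + i))
            = if k = 0 then a else if k = 1 then b else M (k + i) from by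
        by_cases hk0 : k = 0
        · rw [if_pos (c1.2 hk0), if_pos hk0]
        · rw [if_neg (fun hc => hk0 (c1.1 hc)), if_neg hk0]
          by_cases hk1 : k = 1
          · rw [if_pos (c2.2 hk1), if_pos hk1]
          · rw [if_neg (fun hc => hk1 (c2.1 hc)), if_neg hk1]]
    rw [hfun]
    unfold mpsPBC
    rw [List.ofFn_succ, List.ofFn_succ, List.prod_cons, List.prod_cons]
    have e0 : (if (0 : Fin (n+2)) = 0 then a else if (0 : Fin (n+2)) = 1 then b
        else M (0 + i)) = a := by simp
    have e1 : (if (Fin.succ 0 : Fin (n+2)) = 0 then a else if (Fin.succ 0 : Fin (n+2)) = 1 then b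
        else M (Fin.succ 0 + i)) = b := by
      have hs0 : (Fin.succ 0 : Fin (n+2)) = 1 := rfl
      rw [hs0, if_neg h10, if_pos rfl]
    have e2 : ∀ k : Fin n,
        (if (Fin.succ (Fin.succ k) : Fin (n+2)) = 0 then a
          else if (Fin.succ (Fin.succ k) : Fin (n+2)) = 1 then b
          else M (Fin.succ (Fin.succ k) + i)) = M (Fin.succ (Fin.succ k) + i) := by
      intro k
      have h0 : (Fin.succ (Fin.succ k) : Fin (n+2)) ≠ 0 := Fin.succ_ne_zero _
      have h1' : (Fin.succ (Fin.succ k) : Fin (n+2)) ≠ 1 := by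
        intro hcon
        have : (Fin.succ k : Fin (n+1)) = 0 := by
          apply Fin.succ_injective
          rw [hcon]; rfl
        exact Fin.succ_ne_zero _ this
      rw [if_neg h0, if_neg h1']
    beta_reduce
    rw [e0, e1]
    congr 2
    try exact funext fun k => congrArg akltA (e2 k)
  have htrans : ∀ a b : Fin 3,
      P2 (M i, M (i+1)) (a, b) * Matrix.trace (akltA a * (akltA b * R))
        = Matrix.trace ((P2 (M i, M (i+1)) (a, b) • (akltA a * akltA b)) * R) := by
    intro a b
    rw [Matrix.smul_mul, Matrix.trace_smul, mul_assoc, smul_eq_mul]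
  calc (∑ a : Fin 3, ∑ b : Fin 3, P2 (M i, M (i+1)) (a, b) *
          mpsPBC akltA (n+2) (fun k => if k = i then a else if k = i + 1 then b else M k))
      = ∑ a : Fin 3, ∑ b : Fin 3,
          Matrix.trace ((P2 (M i, M (i+1)) (a, b) • (akltA a * akltA b)) * R) := by
        refine Finset.sum_congr rfl fun a _ => Finset.sum_congr rfl fun b _ => ?_
        rw [key, htrans]
    _ = Matrix.trace ((∑ a : Fin 3, ∑ b : Fin 3,
          P2 (M i, M (i+1)) (a, b) • (akltA a * akltA b)) * R) := by
        rw [Finset.sum_mul, Matrix.trace_sum]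
        refine Finset.sum_congr rfl fun a _ => ?_
        rw [Finset.sum_mul, Matrix.trace_sum]
    _ = 0 := by rw [aklt_core, Matrix.zero_mul, Matrix.trace_zero]

lemma sum_mulVec' {m k : Type*} [Fintype m] [Fintype k] (s : Finset k)
    (A : k → Matrix m m ℂ) (ψ : m → ℂ) :
    (∑ i ∈ s, A i).mulVec ψ = ∑ i ∈ s, (A i).mulVec ψ := by
  funext M
  simp only [Matrix.mulVec, dotProduct, Matrix.sum_apply, Finset.sum_apply, Finset.sum_mul]
  rw [Finset.sum_comm]

lemma kron_conjT {m k : Type*} [Fintype m] [Fintype k] [DecidableEq m] [DecidableEq k]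
    (A : Matrix m m ℂ) (B : Matrix k k ℂ) : (A ⊗ₖ B)ᴴ = Aᴴ ⊗ₖ Bᴴ := by
  ext ⟨a,b⟩ ⟨c,d⟩
  simp [Matrix.conjTranspose_apply, Matrix.kroneckerMap_apply, star_mul']

lemma twoSiteOp_posSemidef {N : ℕ} (i j : Fin N) (hij : i ≠ j) :
    (twoSiteOp P2 N i j).PosSemidef := by
  rw [twoSiteOp_eq_submatrix P2 i j hij]
  refine Matrix.PosSemidef.submatrix ?_ _
  have hfact : P2 ⊗ₖ (1 : Matrix ({k : Fin N // k ≠ i ∧ k ≠ j} → Fin 3)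
      ({k : Fin N // k ≠ i ∧ k ≠ j} → Fin 3) ℂ)
      = (P2 ⊗ₖ (1 : Matrix ({k : Fin N // k ≠ i ∧ k ≠ j} → Fin 3)
          ({k : Fin N // k ≠ i ∧ k ≠ j} → Fin 3) ℂ))ᴴ *
        (P2 ⊗ₖ (1 : Matrix ({k : Fin N // k ≠ i ∧ k ≠ j} → Fin 3)
          ({k : Fin N // k ≠ i ∧ k ≠ j} → Fin 3) ℂ)) := by
    rw [kron_conjT, Matrix.conjTranspose_one, ← Matrix.mul_kronecker_mul, Matrix.one_mul,
      p2_herm, p2_idem]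
  rw [hfact]
  exact Matrix.posSemidef_conjTranspose_mul_self _

theorem aklt_state_is_ground_state :
    ∀ N, ∀ hN : 3 ≤ N,
      mpsPBC akltA N ≠ 0 ∧
      (∑ i : Fin N,
        twoSiteOp P2 N i ⟨((i : ℕ) + 1) % N, Nat.mod_lt _ (by omega)⟩).mulVec
          (mpsPBC akltA N) = 0 ∧
      ∀ φ : (Fin N → Fin 3) → ℂ,
        0 ≤ star φ ⬝ᵥ (∑ i : Fin N,
          twoSiteOp P2 N i ⟨((i : ℕ) + 1) % N, Nat.mod_lt _ (by omega)⟩).mulVec φ := by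
  intro N hN
  obtain ⟨n, rfl⟩ : ∃ n, N = n + 2 := ⟨N - 2, by omega⟩
  have hjeq : ∀ i : Fin (n+2),
      (⟨((i : ℕ) + 1) % (n+2), Nat.mod_lt _ (by omega)⟩ : Fin (n+2)) = i + 1 := by
    intro i
    apply Fin.ext
    simp [Fin.add_def]
  refine ⟨mps_ne_zero n, ?_, ?_⟩
  · funext M
    rw [sum_mulVec']
    simp only [Finset.sum_apply, Pi.zero_apply]
    refine Finset.sum_eq_zero fun i _ => ?_
    rw [hjeq i]
    exact site_annihilate i M
  · intro φ
    rw [sum_mulVec']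
    have hsum : star φ ⬝ᵥ (∑ i : Fin (n+2),
        (twoSiteOp P2 (n+2) i ⟨((i : ℕ) + 1) % (n+2), Nat.mod_lt _ (by omega)⟩).mulVec φ)
        = ∑ i : Fin (n+2), star φ ⬝ᵥ
            (twoSiteOp P2 (n+2) i ⟨((i : ℕ) + 1) % (n+2), Nat.mod_lt _ (by omega)⟩).mulVec φ := by
      simp only [dotProduct, Finset.sum_apply, Finset.mul_sum]
      rw [Finset.sum_comm]
    rw [hsum]
    refine Finset.sum_nonneg fun i _ => ?_
    have hij : i ≠ i + 1 := by
      have h10 : (1 : Fin (n+2)) ≠ 0 := by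
        intro hcon
        simpa using congrArg Fin.val hcon
      intro hcon
      have hcon' : i + 0 = i + 1 := by simpa using hcon
      exact h10 (add_left_cancel hcon').symm
    rw [hjeq i]
    exact (twoSiteOp_posSemidef i (i+1) hij).dotProduct_mulVec_nonneg φ
end

section
/- For every N ≥ 1 and every α ∈ {x, y, z}, the periodic-boundary spin-1 AKLT state |Ψ_N⟩ ∈ (ℂ³)^{⊗N} satisfies (Σ_{i=1}^N S_α^{(i)}) |Ψ_N⟩ = 0, where S_α^{(i)} acts as the spin-1 matrix S_α on the i-th tensor factor and as identity elsewhere; that is, the AKLT state is a global SU(2) singlet. -/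
open Matrix

noncomputable def Jop : Fin 3 → Matrix (Fin 2) (Fin 2) ℂ
  | 0 => (1/2 : ℂ) • !![0, 1; 1, 0]
  | 1 => -(1/2 : ℂ) • !![0, -Complex.I; Complex.I, 0]
  | 2 => (1/2 : ℂ) • !![1, 0; 0, -1]

set_option maxHeartbeats 1000000 in
lemma key_local (α : Fin 3) (m : Fin 3) :
    ∑ m' : Fin 3, spin1 α m m' • akltA m' = Jop α * akltA m - akltA m * Jop α := by
  have h2 : (Real.sqrt 2 : ℂ) ^ 2 = 2 := by
    norm_cast; rw [Real.sq_sqrt]; norm_num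
  have h3 : (Real.sqrt 3 : ℂ) ^ 2 = 3 := by
    norm_cast; rw [Real.sq_sqrt]; norm_num
  have h23 : (Real.sqrt (2/3) : ℂ) = Real.sqrt 2 / Real.sqrt 3 := by
    have : Real.sqrt (2/3) = Real.sqrt 2 / Real.sqrt 3 := by
      rw [Real.sqrt_div]; norm_num
    rw [this]; push_cast; ring
  have h2n : (Real.sqrt 2 : ℂ) ≠ 0 := by
    simp [Complex.ofReal_ne_zero]
  have h3n : (Real.sqrt 3 : ℂ) ≠ 0 := by
    simp [Complex.ofReal_ne_zero]
  fin_cases α <;> fin_cases m <;>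
    · ext i j
      fin_cases i <;> fin_cases j <;>
        · simp [spin1, akltA, Jop, Fin.sum_univ_three, Matrix.mul_apply, Fin.sum_univ_two, h23]
          try field_simp
          try linear_combination ((Real.sqrt 3 : ℝ) : ℂ) * h2
          try linear_combination Complex.I * ((Real.sqrt 3 : ℝ) : ℂ) * h2
          try linear_combination -Complex.I * ((Real.sqrt 3 : ℝ) : ℂ) * h2
          try linear_combination -((Real.sqrt 3 : ℝ) : ℂ) * h2
          try ring
          try simp [h2]

lemma slot_decomp {n : ℕ} (f : Fin n → Matrix (Fin 2) (Fin 2) ℂ) (i : Fin n) :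
    ∃ P Q : Matrix (Fin 2) (Fin 2) ℂ, ∀ X,
      (List.ofFn fun j => if j = i then X else f j).prod = P * X * Q := by
  induction n with
  | zero => exact i.elim0
  | succ n ih =>
    rcases Fin.eq_zero_or_eq_succ i with hi | ⟨k, rfl⟩
    · subst hi
      refine ⟨1, (List.ofFn fun j : Fin n => f j.succ).prod, fun X => ?_⟩
      rw [List.ofFn_succ, List.prod_cons]
      simp [Fin.succ_ne_zero]
    · obtain ⟨P, Q, hPQ⟩ := ih (fun j => f j.succ) k
      refine ⟨f 0 * P, Q, fun X => ?_⟩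
      rw [List.ofFn_succ, List.prod_cons]
      have h1 : (if (0 : Fin (n+1)) = k.succ then X else f 0) = f 0 := by
        simp [(Fin.succ_ne_zero k).symm, eq_comm]
      have h2 : (List.ofFn fun j : Fin n => if j.succ = k.succ then X else f j.succ).prod
          = P * X * Q := by
        rw [show (fun j : Fin n => if j.succ = k.succ then X else f j.succ)
            = fun j : Fin n => if j = k then X else f j.succ from
          funext fun j => by simp [Fin.succ_inj]]
        exact hPQ X
      rw [h1, h2, ← mul_assoc, ← mul_assoc]

lemma aklt_deriv_sum {n : ℕ} (f : Fin n → Matrix (Fin 2) (Fin 2) ℂ)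
    (J : Matrix (Fin 2) (Fin 2) ℂ) :
    ∑ i : Fin n, (List.ofFn fun j => if j = i then J * f j - f j * J else f j).prod
      = J * (List.ofFn f).prod - (List.ofFn f).prod * J := by
  induction n with
  | zero => simp
  | succ n ih =>
    rw [Fin.sum_univ_succ]
    have h0 : (List.ofFn fun j => if j = (0 : Fin (n+1)) then J * f j - f j * J else f j).prod
        = (J * f 0 - f 0 * J) * (List.ofFn fun j : Fin n => f j.succ).prod := by
      rw [List.ofFn_succ, List.prod_cons]
      simp [Fin.succ_ne_zero]
    have hsucc : ∀ k : Fin n,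
        (List.ofFn fun j => if j = Fin.succ k then J * f j - f j * J else f j).prod
        = f 0 * (List.ofFn fun j : Fin n =>
            if j = k then J * f j.succ - f j.succ * J else f j.succ).prod := by
      intro k
      rw [List.ofFn_succ, List.prod_cons,
        show (fun j : Fin n => if j.succ = k.succ then J * f j.succ - f j.succ * J else f j.succ)
            = fun j : Fin n => if j = k then J * f j.succ - f j.succ * J else f j.succ from
          funext fun j => by simp [Fin.succ_inj],
        if_neg (Fin.succ_ne_zero k).symm]
    rw [h0]
    simp only [hsucc]
    rw [← Finset.mul_sum, ih (fun j => f j.succ), List.ofFn_succ, List.prod_cons]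
    noncomm_ring

lemma siteOp_mulVec {d N : ℕ} (B : Matrix (Fin d) (Fin d) ℂ) (i : Fin N)
    (ψ : (Fin N → Fin d) → ℂ) (M : Fin N → Fin d) :
    (siteOp B N i).mulVec ψ M = ∑ m : Fin d, B (M i) m * ψ (Function.update M i m) := by
  classical
  have himg : ∀ M' : Fin N → Fin d,
      M' ∉ Finset.image (Function.update M i) Finset.univ →
      siteOp B N i M M' = 0 := by
    intro M' hM'
    have hne : M' ≠ Function.update M i (M' i) := by
      intro h
      exact hM' (Finset.mem_image.mpr ⟨M' i, Finset.mem_univ _, h.symm⟩)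
    obtain ⟨j, hj⟩ : ∃ j, M' j ≠ Function.update M i (M' i) j := by
      by_contra h; push_neg at h; exact hne (funext h)
    have hji : j ≠ i := by rintro rfl; simp at hj
    have hMj : M j ≠ M' j := by
      rw [Function.update_of_ne hji] at hj
      exact fun h => hj h.symm
    unfold siteOp
    simp only [Matrix.of_apply]
    apply Finset.prod_eq_zero (Finset.mem_univ j)
    simp [hji, hMj]
  have hsub : ∑ M' : Fin N → Fin d, siteOp B N i M M' * ψ M'
      = ∑ M' ∈ Finset.image (Function.update M i) Finset.univ,
          siteOp B N i M M' * ψ M' := by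
    symm
    apply Finset.sum_subset (Finset.subset_univ _)
    intro M' _ hM'
    rw [himg M' hM', zero_mul]
  have hinj : ∀ a ∈ (Finset.univ : Finset (Fin d)), ∀ b ∈ Finset.univ,
      Function.update M i a = Function.update M i b → a = b := by
    intro a _ b _ hab
    have := congrFun hab i
    simpa using this
  rw [Matrix.mulVec, dotProduct]
  rw [hsub, Finset.sum_image hinj]
  apply Finset.sum_congr rfl
  intro m _
  congr 1
  unfold siteOp
  simp only [Matrix.of_apply]
  rw [Finset.prod_eq_single i]
  · simp
  · intro j _ hji
    simp [hji, Function.update_of_ne hji]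
  · simp

theorem aklt_state_is_singlet :
    ∀ N, 1 ≤ N → ∀ α : Fin 3,
      (∑ i : Fin N, siteOp (spin1 α) N i).mulVec (mpsPBC akltA N) = 0 := by
  intro N _ α
  funext M
  have hsum : (∑ i : Fin N, siteOp (spin1 α) N i).mulVec (mpsPBC akltA N) M
      = ∑ i : Fin N, (siteOp (spin1 α) N i).mulVec (mpsPBC akltA N) M := by
    simp only [Matrix.mulVec, dotProduct, Matrix.sum_apply, Finset.sum_mul]
    exact Finset.sum_comm
  rw [hsum]
  -- rewrite each site term as a trace with a commutator inserted in slot i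
  have hterm : ∀ i : Fin N, (siteOp (spin1 α) N i).mulVec (mpsPBC akltA N) M
      = Matrix.trace (List.ofFn fun j =>
          if j = i then Jop α * akltA (M j) - akltA (M j) * Jop α else akltA (M j)).prod := by
    intro i
    rw [siteOp_mulVec]
    obtain ⟨P, Q, hPQ⟩ := slot_decomp (fun j => akltA (M j)) i
    have hmps : ∀ m : Fin 3, mpsPBC akltA N (Function.update M i m)
        = Matrix.trace (P * akltA m * Q) := by
      intro m
      unfold mpsPBC
      rw [show (fun j => akltA (Function.update M i m j))
          = fun j => if j = i then akltA m else akltA (M j) from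
        funext fun j => by
          by_cases h : j = i
          · subst h; simp
          · simp [Function.update_of_ne h, h]]
      rw [hPQ]
    simp only [hmps]
    have : ∑ m : Fin 3, spin1 α (M i) m * Matrix.trace (P * akltA m * Q)
        = Matrix.trace (P * (∑ m : Fin 3, spin1 α (M i) m • akltA m) * Q) := by
      rw [Finset.mul_sum, Finset.sum_mul, Matrix.trace_sum]
      apply Finset.sum_congr rfl
      intro m _
      rw [Matrix.mul_smul, Matrix.smul_mul, Matrix.trace_smul]
      rfl
    have hfun : (List.ofFn fun j =>
          if j = i then Jop α * akltA (M i) - akltA (M i) * Jop α else akltA (M j))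
        = List.ofFn fun j =>
          if j = i then Jop α * akltA (M j) - akltA (M j) * Jop α else akltA (M j) := by
      congr 1
      funext j
      by_cases h : j = i
      · subst h; rfl
      · simp [h]
    rw [this, key_local α (M i), ← hPQ, hfun]
  simp only [hterm]
  rw [← Matrix.trace_sum, aklt_deriv_sum, Matrix.trace_sub, Matrix.trace_mul_comm, sub_self]
  rfl
end
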